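/- arXiv:1205.5222 — 11 statements merged into one kernel-verified Lean document; each statement's English description precedes it below -/
import Mathlib

section
/- Let n ≥ 1, ℏ > 0, and let Σ be a real symmetric positive definite 2n×2n matrix with Σ + (iℏ/2)J positive semidefinite (as a complex Hermitian matrix) and Σ_{1,1}·Σ_{n+1,n+1} = (Σ_{1,n+1})² + ℏ²/4. If G is a real symmetric positive definite symplectic 2n×2n matrix such that (πℏ)^{-n} exp(−(1/ℏ) zᵀGz) ≤ (2π)^{-n/2}(det Σ)^{-1/2} exp(−(1/2) zᵀΣ^{-1}z) for all z ∈ ℝ^{2n}, then the covariance matrix (ℏ/2)G^{-1} of the corresponding pure Gaussian state agrees with Σ in the three entries pertaining to x_1 and p_1: (ℏ/2)(G^{-1})_{1,1} = Σ_{1,1}, (ℏ/2)(G^{-1})_{1,n+1} = Σ_{1,n+1}, and (ℏ/2)(G^{-1})_{n+1,n+1} = Σ_{n+1,n+1}. -/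
open Matrix MeasureTheory
open scoped ComplexOrder

noncomputable section

/-- The standard symplectic matrix `J = [[0, I], [-I, 0]]` of size `2n`, indexed by
`Fin n ⊕ Fin n`: `Sum.inl j` is the coordinate `x_j` and `Sum.inr j` is `p_j`. -/
def stdJ (n : ℕ) : Matrix (Fin n ⊕ Fin n) (Fin n ⊕ Fin n) ℝ :=
  Matrix.fromBlocks 0 1 (-1) 0

/-- A real `2n × 2n` matrix `S` is symplectic if `Sᵀ J S = J`. -/
def IsSymplectic {n : ℕ} (S : Matrix (Fin n ⊕ Fin n) (Fin n ⊕ Fin n) ℝ) : Prop :=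
  Sᵀ * stdJ n * S = stdJ n

section Aux

variable {ι : Type*} [Fintype ι] [DecidableEq ι]

lemma dot_mulVec_symm (M : Matrix ι ι ℝ) (hM : M.IsSymm) (u v : ι → ℝ) :
    u ⬝ᵥ M.mulVec v = (M.mulVec u) ⬝ᵥ v := by
  rw [Matrix.dotProduct_mulVec, ← hM.eq, Matrix.vecMul_transpose, hM.eq]

lemma key_inv_bound (N : Matrix ι ι ℝ) (hN : N.PosDef) (hNs : N.IsSymm) (z w : ι → ℝ) :
    2 * (w ⬝ᵥ z) ≤ w ⬝ᵥ N.mulVec w + z ⬝ᵥ N⁻¹.mulVec z := by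
  have hdet : IsUnit N.det := isUnit_iff_ne_zero.2 hN.det_pos.ne'
  have h1 : N * N⁻¹ = 1 := Matrix.mul_nonsing_inv N hdet
  set u := N⁻¹.mulVec z with hu
  have hNu : N.mulVec u = z := by
    rw [hu, Matrix.mulVec_mulVec, h1, Matrix.one_mulVec]
  have h0 : 0 ≤ (w - u) ⬝ᵥ N.mulVec (w - u) := by
    simpa using hN.posSemidef.dotProduct_mulVec_nonneg (w - u)
  have e1 : (w - u) ⬝ᵥ N.mulVec (w - u)
      = w ⬝ᵥ N.mulVec w - 2 * (w ⬝ᵥ z) + z ⬝ᵥ N⁻¹.mulVec z := by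
    have h2 : u ⬝ᵥ N.mulVec w = z ⬝ᵥ w := by rw [dot_mulVec_symm N hNs, hNu]
    have h3 : w ⬝ᵥ N.mulVec u = w ⬝ᵥ z := by rw [hNu]
    have h4 : u ⬝ᵥ N.mulVec u = z ⬝ᵥ u := by rw [dot_mulVec_symm N hNs, hNu]
    have h5 : z ⬝ᵥ w = w ⬝ᵥ z := dotProduct_comm z w
    have h6 : z ⬝ᵥ u = z ⬝ᵥ N⁻¹.mulVec z := by rw [hu]
    rw [sub_dotProduct, Matrix.mulVec_sub, dotProduct_sub,
      dotProduct_sub, h2, h3, h4, h5, h6]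
    ring
  linarith [h0, e1.symm.le, e1.le]

lemma entry_eq (M : Matrix ι ι ℝ) (i j : ι) :
    Pi.single i (1 : ℝ) ⬝ᵥ M.mulVec (Pi.single j 1) = M i j := by
  simp

lemma quad_comb (M : Matrix ι ι ℝ) (i j : ι) (s t : ℝ) (z : ι → ℝ)
    (hz : z = s • (Pi.single i 1 : ι → ℝ) + t • (Pi.single j 1 : ι → ℝ)) :
    z ⬝ᵥ M.mulVec z
    = s * s * M i i + s * t * M i j + t * s * M j i + t * t * M j j := by
  subst hz
  simp [Matrix.mulVec_add, Matrix.mulVec_smul, dotProduct_add,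
    add_dotProduct, smul_dotProduct, dotProduct_smul,
    single_dotProduct, smul_eq_mul]
  ring

lemma quadform_facts {P11 P12 P22 : ℝ}
    (h : ∀ s t : ℝ, 0 ≤ P11 * s ^ 2 + 2 * P12 * (s * t) + P22 * t ^ 2) :
    0 ≤ P11 ∧ 0 ≤ P22 ∧ P12 ^ 2 ≤ P11 * P22 := by
  have h1 : 0 ≤ P11 := by nlinarith [h 1 0]
  have h2 : 0 ≤ P22 := by nlinarith [h 0 1]
  refine ⟨h1, h2, ?_⟩
  rcases eq_or_lt_of_le h1 with h0 | h0
  · have hz : P12 = 0 := by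
      by_contra hne
      have h3 := h (-(P22 + 1) / (2 * P12)) 1
      rw [← h0] at h3
      have h4 : P12 * (-(P22 + 1) / (2 * P12)) = -(P22 + 1) / 2 := by
        field_simp
      nlinarith [h3, h4]
    rw [hz, ← h0]
    norm_num
  · nlinarith [h (-P12) P11, h0]

lemma final_alg {h2 a' b' c' A B C : ℝ} (ha' : 0 < a') (hb' : 0 < b') (hh2 : 0 < h2)
    (hP11 : 0 ≤ A - a') (hP22 : 0 ≤ B - b')
    (hPdet : (C - c') ^ 2 ≤ (A - a') * (B - b'))
    (hsat : A * B = C ^ 2 + h2) (hup : h2 ≤ a' * b' - c' ^ 2) :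
    a' = A ∧ c' = C ∧ b' = B := by
  set p := A - a' with hpd
  set r := B - b' with hrd
  set q := C - c' with hqd
  have hEq : b' * p + a' * r - 2 * c' * q + (p * r - q ^ 2) = h2 - (a' * b' - c' ^ 2) := by
    rw [hpd, hrd, hqd]
    linear_combination hsat
  have hT2 : 0 ≤ p * r - q ^ 2 := by nlinarith [hPdet]
  have hS : b' * p + a' * r ≤ 2 * c' * q := by linarith [hEq, hT2, hup]
  have hSpos : 0 ≤ b' * p + a' * r :=
    add_nonneg (mul_nonneg hb'.le hP11) (mul_nonneg ha'.le hP22)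
  have hqz : q = 0 := by
    have h4 : (b' * p + a' * r) ^ 2 ≤ (2 * c' * q) ^ 2 := by nlinarith [hS, hSpos]
    have h5 : 4 * (a' * b') * q ^ 2 ≤ (b' * p + a' * r) ^ 2 := by
      nlinarith [sq_nonneg (b' * p - a' * r),
        mul_le_mul_of_nonneg_left hPdet (by positivity : (0:ℝ) ≤ 4 * (a' * b'))]
    have h6 : q ^ 2 ≤ 0 := by nlinarith [h4, h5, hup, hh2, sq_nonneg q]
    have h7 : q ^ 2 = 0 := le_antisymm h6 (sq_nonneg q)
    exact pow_eq_zero_iff (by norm_num) |>.1 h7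
  have h8 : b' * p + a' * r ≤ 0 := by
    rw [hqz] at hS; linarith
  have hplez : p ≤ 0 := by nlinarith [h8, mul_nonneg ha'.le hP22, hb']
  have hrlez : r ≤ 0 := by nlinarith [h8, mul_nonneg hb'.le hP11, ha']
  have hpz : p = 0 := le_antisymm hplez hP11
  have hrz : r = 0 := le_antisymm hrlez hP22
  have e1 : A - a' = 0 := by rw [← hpd]; exact hpz
  have e2 : B - b' = 0 := by rw [← hrd]; exact hrz
  have e3 : C - c' = 0 := by rw [← hqd]; exact hqz
  exact ⟨by linarith, by linarith, by linarith⟩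

lemma div_quad (a b c : ℝ) (hd : 0 < a * b - c * c) :
    b / (a * b - c * c) * (b / (a * b - c * c)) * a
      + b / (a * b - c * c) * (-(c / (a * b - c * c))) * c
      + -(c / (a * b - c * c)) * (b / (a * b - c * c)) * c
      + -(c / (a * b - c * c)) * (-(c / (a * b - c * c))) * b
    = b / (a * b - c * c) := by
  have hne : a * b - c * c ≠ 0 := hd.ne'
  have key : b / (a * b - c * c) * (b / (a * b - c * c)) * a
        + b / (a * b - c * c) * (-(c / (a * b - c * c))) * c
        + -(c / (a * b - c * c)) * (b / (a * b - c * c)) * c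
        + -(c / (a * b - c * c)) * (-(c / (a * b - c * c))) * b
      = b * (a * b - c * c) / (a * b - c * c) / (a * b - c * c) := by ring
  rw [key, mul_div_assoc, div_self hne, mul_one]

end Aux

set_option maxHeartbeats 2000000 in
/-- Under the same hypotheses as Statement 0 (quantum condition plus saturation of
the first Robertson–Schrödinger inequality), any symmetric positive definite symplectic matrix `G`
whose Gaussian Wigner function is dominated by that of the mixed state has covariance matrix
`(ℏ/2)G⁻¹` agreeing with `Σ` in the three entries pertaining to `x₁` and `p₁`. -/
theorem stmt1 {n : ℕ} (hn : 0 < n) (ℏ : ℝ) (hℏ : 0 < ℏ)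
    (Cov : Matrix (Fin n ⊕ Fin n) (Fin n ⊕ Fin n) ℝ)
    (hCovSymm : Cov.IsSymm) (hCovPos : Cov.PosDef)
    (hquant : (Cov.map Complex.ofReal
        + (Complex.I * ((ℏ : ℂ) / 2)) • (stdJ n).map Complex.ofReal).PosSemidef)
    (hsat : Cov (Sum.inl ⟨0, hn⟩) (Sum.inl ⟨0, hn⟩) * Cov (Sum.inr ⟨0, hn⟩) (Sum.inr ⟨0, hn⟩)
        = Cov (Sum.inl ⟨0, hn⟩) (Sum.inr ⟨0, hn⟩) ^ 2 + ℏ ^ 2 / 4)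
    (G : Matrix (Fin n ⊕ Fin n) (Fin n ⊕ Fin n) ℝ)
    (hGSymm : G.IsSymm) (hGPos : G.PosDef) (hGSp : IsSymplectic G)
    (hdom : ∀ z : Fin n ⊕ Fin n → ℝ,
        (Real.pi * ℏ) ^ (-(n : ℝ)) * Real.exp (-(1 / ℏ) * (z ⬝ᵥ G.mulVec z)) ≤
          (2 * Real.pi) ^ (-(n : ℝ) / 2) * Cov.det ^ (-(1 : ℝ) / 2) *
            Real.exp (-(1 / 2) * (z ⬝ᵥ Cov⁻¹.mulVec z))) :
    (ℏ / 2) * G⁻¹ (Sum.inl ⟨0, hn⟩) (Sum.inl ⟨0, hn⟩) = Cov (Sum.inl ⟨0, hn⟩) (Sum.inl ⟨0, hn⟩) ∧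
    (ℏ / 2) * G⁻¹ (Sum.inl ⟨0, hn⟩) (Sum.inr ⟨0, hn⟩) = Cov (Sum.inl ⟨0, hn⟩) (Sum.inr ⟨0, hn⟩) ∧
    (ℏ / 2) * G⁻¹ (Sum.inr ⟨0, hn⟩) (Sum.inr ⟨0, hn⟩) = Cov (Sum.inr ⟨0, hn⟩) (Sum.inr ⟨0, hn⟩) := by
  have hπ := Real.pi_pos
  set x : Fin n ⊕ Fin n := Sum.inl ⟨0, hn⟩ with hxdef
  set p : Fin n ⊕ Fin n := Sum.inr ⟨0, hn⟩ with hpdef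
  have hxp : x ≠ p := by simp [hxdef, hpdef]
  -- basic facts on G and K := G⁻¹
  have hdetG : IsUnit G.det := isUnit_iff_ne_zero.2 hGPos.det_pos.ne'
  set K := G⁻¹ with hKdef
  have hGK : G * K = 1 := Matrix.mul_nonsing_inv G hdetG
  have hKG : K * G = 1 := Matrix.nonsing_inv_mul G hdetG
  have hKinv : K⁻¹ = G := Matrix.nonsing_inv_nonsing_inv G hdetG
  have hKPos : K.PosDef := hGPos.inv
  have hKsymm : K.IsSymm := by
    show Kᵀ = K
    rw [hKdef, Matrix.transpose_nonsing_inv, hGSymm.eq]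
  -- J facts
  have hJJ : stdJ n * stdJ n = -1 := by
    rw [stdJ, Matrix.fromBlocks_multiply]
    ext i j
    rcases i with i | i <;> rcases j with j | j <;>
      simp [Matrix.one_apply, eq_comm]
  have hGJG : G * stdJ n * G = stdJ n := by
    have h := hGSp
    rwa [IsSymplectic, hGSymm.eq] at h
  have hKJK : K * stdJ n * K = stdJ n := by
    calc K * stdJ n * K = K * (G * stdJ n * G) * K := by rw [hGJG]
      _ = (K * G) * stdJ n * (G * K) := by simp only [Matrix.mul_assoc]
      _ = stdJ n := by rw [hKG, hGK, Matrix.one_mul, Matrix.mul_one]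
  have hGeq : G = -(stdJ n * K * stdJ n) := by
    have h1 : (-(stdJ n * K * stdJ n)) * K = 1 := by
      have h2 : (stdJ n * K * stdJ n) * K = stdJ n * (K * stdJ n * K) := by
        simp only [Matrix.mul_assoc]
      rw [Matrix.neg_mul, h2, hKJK, hJJ]
      simp
    rw [← hKinv, Matrix.inv_eq_left_inv h1]
  have hGxx : G x x = K p p := by
    rw [hGeq]
    have h3 : (stdJ n * K * stdJ n) x x = -K p p := by
      simp [Matrix.mul_apply, stdJ, Fintype.sum_sum_type, Matrix.one_apply, hxdef, hpdef,
        Finset.mul_sum, Finset.sum_mul]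
    simp [h3]
  -- Step 1 : pointwise domination gives quadratic form domination
  have hc1 : (0:ℝ) < (Real.pi * ℏ) ^ (-(n : ℝ)) :=
    Real.rpow_pos_of_pos (by positivity) _
  have hc2 : (0:ℝ) < (2 * Real.pi) ^ (-(n : ℝ) / 2) * Cov.det ^ (-(1:ℝ) / 2) :=
    mul_pos (Real.rpow_pos_of_pos (by positivity) _)
      (Real.rpow_pos_of_pos hCovPos.det_pos _)
  have hstar : ∀ z : Fin n ⊕ Fin n → ℝ,
      z ⬝ᵥ Cov⁻¹.mulVec z ≤ 2 / ℏ * (z ⬝ᵥ G.mulVec z) := by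
    intro z
    by_contra hcon
    push_neg at hcon
    set α := 1 / ℏ * (z ⬝ᵥ G.mulVec z) with hα
    set β := 1 / 2 * (z ⬝ᵥ Cov⁻¹.mulVec z) with hβ
    have hab : α < β := by
      rw [hα, hβ]
      have h1 : 1 / ℏ * (z ⬝ᵥ G.mulVec z) = 1/2 * (2 / ℏ * (z ⬝ᵥ G.mulVec z)) := by ring
      rw [h1]
      linarith [hcon]
    set c1 := (Real.pi * ℏ) ^ (-(n : ℝ)) with hc1d
    set c2 := (2 * Real.pi) ^ (-(n : ℝ) / 2) * Cov.det ^ (-(1:ℝ) / 2) with hc2d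
    set s := (|Real.log (c2 / c1)| + 1) / (β - α) with hs
    have hspos : 0 < s := div_pos (by positivity) (by linarith)
    have hdz := hdom (Real.sqrt s • z)
    have hq : ∀ M : Matrix (Fin n ⊕ Fin n) (Fin n ⊕ Fin n) ℝ,
        (Real.sqrt s • z) ⬝ᵥ M.mulVec (Real.sqrt s • z) = s * (z ⬝ᵥ M.mulVec z) := by
      intro M
      rw [Matrix.mulVec_smul, smul_dotProduct, dotProduct_smul,
        smul_eq_mul, smul_eq_mul, ← mul_assoc, Real.mul_self_sqrt hspos.le]
    rw [hq G, hq Cov⁻¹] at hdz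
    have e1 : -(1 / ℏ) * (s * (z ⬝ᵥ G.mulVec z)) = -(α * s) := by rw [hα]; ring
    have e2 : -(1 / 2) * (s * (z ⬝ᵥ Cov⁻¹.mulVec z)) = -(β * s) := by rw [hβ]; ring
    rw [e1, e2] at hdz
    have hne : β - α ≠ 0 := (by linarith : (0:ℝ) < β - α).ne'
    have hβα : (β - α) * s = |Real.log (c2 / c1)| + 1 := by
      rw [hs, mul_comm, div_mul_cancel₀ _ hne]
    have hlog : Real.log (c2 / c1) < (β - α) * s := by
      rw [hβα]
      calc Real.log (c2 / c1) ≤ |Real.log (c2 / c1)| := le_abs_self _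
        _ < |Real.log (c2 / c1)| + 1 := by linarith
    have hexp : c2 / c1 < Real.exp ((β - α) * s) := by
      rw [← Real.exp_log (div_pos hc2 hc1)]
      exact Real.exp_lt_exp.2 hlog
    have h3 : c2 < Real.exp ((β - α) * s) * c1 := (div_lt_iff₀ hc1).1 hexp
    have h4 : Real.exp (-((β - α) * s)) * Real.exp ((β - α) * s) = 1 := by
      rw [← Real.exp_add]; simp
    have h2 : c2 * Real.exp (-((β - α) * s)) < c1 := by
      nlinarith [Real.exp_pos (-((β - α) * s))]
    have hlt : c2 * Real.exp (-(β * s)) < c1 * Real.exp (-(α * s)) := by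
      have e3 : -(β * s) = -(α * s) + -((β - α) * s) := by ring
      rw [e3, Real.exp_add]
      calc c2 * (Real.exp (-(α * s)) * Real.exp (-((β - α) * s)))
          = (c2 * Real.exp (-((β - α) * s))) * Real.exp (-(α * s)) := by ring
        _ < c1 * Real.exp (-(α * s)) :=
            mul_lt_mul_of_pos_right h2 (Real.exp_pos _)
    exact absurd hdz (not_le.2 hlt)
  -- Step 2 : inverse monotonicity
  have hCovInvPos : Cov⁻¹.PosDef := hCovPos.inv
  have hdetCov : IsUnit Cov.det := isUnit_iff_ne_zero.2 hCovPos.det_pos.ne'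
  have hCovInvSymm : Cov⁻¹.IsSymm := by
    show Cov⁻¹ᵀ = Cov⁻¹
    rw [Matrix.transpose_nonsing_inv, hCovSymm.eq]
  have hCovInvInv : Cov⁻¹⁻¹ = Cov := Matrix.nonsing_inv_nonsing_inv Cov hdetCov
  have hdomK : ∀ z : Fin n ⊕ Fin n → ℝ,
      ℏ / 2 * (z ⬝ᵥ K.mulVec z) ≤ z ⬝ᵥ Cov.mulVec z := by
    intro z
    have hkey := key_inv_bound Cov⁻¹ hCovInvPos hCovInvSymm z ((ℏ/2) • K.mulVec z)
    rw [hCovInvInv] at hkey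
    have hsw := hstar ((ℏ/2) • K.mulVec z)
    have h1 : ((ℏ/2) • K.mulVec z) ⬝ᵥ z = ℏ/2 * (z ⬝ᵥ K.mulVec z) := by
      rw [smul_dotProduct, smul_eq_mul]
      congr 1
      exact (dot_mulVec_symm K hKsymm z z).symm
    have h2 : ((ℏ/2) • K.mulVec z) ⬝ᵥ G.mulVec ((ℏ/2) • K.mulVec z)
        = (ℏ/2)^2 * (z ⬝ᵥ K.mulVec z) := by
      rw [Matrix.mulVec_smul, smul_dotProduct, dotProduct_smul,
        smul_eq_mul, smul_eq_mul]
      have h3 : G.mulVec (K.mulVec z) = z := by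
        rw [Matrix.mulVec_mulVec, hGK, Matrix.one_mulVec]
      rw [h3, (dot_mulVec_symm K hKsymm z z).symm]
      ring
    rw [h1] at hkey
    rw [h2] at hsw
    have h4 : 2/ℏ * ((ℏ/2)^2 * (z ⬝ᵥ K.mulVec z)) = ℏ/2 * (z ⬝ᵥ K.mulVec z) := by
      field_simp
    rw [h4] at hsw
    linarith [hkey, hsw]
  -- entries positivity
  have hbne : (Pi.single p 1 : Fin n ⊕ Fin n → ℝ) ≠ 0 := by
    intro h
    have h2 := congrFun h p
    simp at h2
  have hane : (Pi.single x 1 : Fin n ⊕ Fin n → ℝ) ≠ 0 := by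
    intro h
    have h2 := congrFun h x
    simp at h2
  have hb : 0 < K p p := by simpa using hKPos.dotProduct_mulVec_pos hbne
  have ha : 0 < K x x := by simpa using hKPos.dotProduct_mulVec_pos hane
  have hsymK : K p x = K x p := hKsymm.apply x p
  -- positivity of the 2x2 determinant of K
  have hzne : (K p p • (Pi.single x 1 : Fin n ⊕ Fin n → ℝ)
      + (-(K x p)) • (Pi.single p 1 : Fin n ⊕ Fin n → ℝ)) ≠ 0 := by
    intro h
    have h2 := congrFun h x
    simp [Pi.single_apply, hxp] at h2
    exact hb.ne' h2
  have hq0 := hKPos.dotProduct_mulVec_pos hzne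
  rw [star_trivial] at hq0
  have hqc := quad_comb K x p (K p p) (-(K x p))
    (K p p • (Pi.single x 1 : Fin n ⊕ Fin n → ℝ)
      + (-(K x p)) • (Pi.single p 1 : Fin n ⊕ Fin n → ℝ)) rfl
  rw [hsymK] at hqc
  rw [hqc] at hq0
  have hd0 : 0 < K x x * K p p - K x p * K x p := by nlinarith [hq0, hb]
  -- pure state uncertainty : det of 2x2 block of K is ≥ 1
  have hd1 : (1:ℝ) ≤ K x x * K p p - K x p * K x p := by
    have hkey := key_inv_bound K hKPos hKsymm (Pi.single x 1)
      ((K p p / (K x x * K p p - K x p * K x p)) • (Pi.single x 1 : Fin n ⊕ Fin n → ℝ)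
        + (-(K x p / (K x x * K p p - K x p * K x p))) • (Pi.single p 1 : Fin n ⊕ Fin n → ℝ))
    rw [hKinv] at hkey
    have hwz : ((K p p / (K x x * K p p - K x p * K x p)) • (Pi.single x 1 : Fin n ⊕ Fin n → ℝ)
        + (-(K x p / (K x x * K p p - K x p * K x p))) • (Pi.single p 1 : Fin n ⊕ Fin n → ℝ))
          ⬝ᵥ Pi.single x 1 = K p p / (K x x * K p p - K x p * K x p) := by
      simp [add_dotProduct, smul_dotProduct, dotProduct_single,
        Pi.single_apply, hxp]
    have hww := quad_comb K x p (K p p / (K x x * K p p - K x p * K x p))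
      (-(K x p / (K x x * K p p - K x p * K x p)))
      ((K p p / (K x x * K p p - K x p * K x p)) • (Pi.single x 1 : Fin n ⊕ Fin n → ℝ)
        + (-(K x p / (K x x * K p p - K x p * K x p))) • (Pi.single p 1 : Fin n ⊕ Fin n → ℝ)) rfl
    rw [hsymK] at hww
    have hww2 : ((K p p / (K x x * K p p - K x p * K x p)) • (Pi.single x 1 : Fin n ⊕ Fin n → ℝ)
        + (-(K x p / (K x x * K p p - K x p * K x p))) • (Pi.single p 1 : Fin n ⊕ Fin n → ℝ))
          ⬝ᵥ K.mulVec ((K p p / (K x x * K p p - K x p * K x p)) • (Pi.single x 1 : Fin n ⊕ Fin n → ℝ)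
        + (-(K x p / (K x x * K p p - K x p * K x p))) • (Pi.single p 1 : Fin n ⊕ Fin n → ℝ))
          = K p p / (K x x * K p p - K x p * K x p) := by
      rw [hww]
      exact div_quad (K x x) (K p p) (K x p) hd0
    have hge : Pi.single x (1:ℝ) ⬝ᵥ G.mulVec (Pi.single x 1) = K p p := by
      rw [entry_eq, hGxx]
    rw [hwz, hww2, hge] at hkey
    have h5 : K p p / (K x x * K p p - K x p * K x p) ≤ K p p := by linarith
    have h6 : K p p ≤ K p p * (K x x * K p p - K x p * K x p) := (div_le_iff₀ hd0).1 h5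
    nlinarith [hb, h6]
  -- the difference quadratic form
  have hPs : ∀ s t : ℝ, 0 ≤ (Cov x x - ℏ/2 * K x x) * s^2
      + 2 * (Cov x p - ℏ/2 * K x p) * (s*t) + (Cov p p - ℏ/2 * K p p) * t^2 := by
    intro s t
    have h := hdomK (s • (Pi.single x 1 : Fin n ⊕ Fin n → ℝ)
      + t • (Pi.single p 1 : Fin n ⊕ Fin n → ℝ))
    have h1 := quad_comb K x p s t (s • (Pi.single x 1 : Fin n ⊕ Fin n → ℝ)
      + t • (Pi.single p 1 : Fin n ⊕ Fin n → ℝ)) rfl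
    have h2 := quad_comb Cov x p s t (s • (Pi.single x 1 : Fin n ⊕ Fin n → ℝ)
      + t • (Pi.single p 1 : Fin n ⊕ Fin n → ℝ)) rfl
    rw [h1, h2, hsymK, hCovSymm.apply x p] at h
    nlinarith [h]
  obtain ⟨hP11, hP22, hPdet⟩ := quadform_facts hPs
  have ha' : 0 < ℏ/2 * K x x := by nlinarith [ha, hℏ]
  have hb' : 0 < ℏ/2 * K p p := by nlinarith [hb, hℏ]
  have hup : ℏ^2/4 ≤ (ℏ/2 * K x x) * (ℏ/2 * K p p) - (ℏ/2 * K x p)^2 := by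
    nlinarith [mul_le_mul_of_nonneg_left hd1 (by positivity : (0:ℝ) ≤ ℏ^2/4)]
  have hh2 : (0:ℝ) < ℏ^2/4 := by positivity
  exact final_alg ha' hb' hh2 hP11 hP22 hPdet hsat hup
end
end

section
/- (Williamson's symplectic diagonalization theorem.) Let M be a real symmetric positive definite matrix of size 2n. Then there exist a real symplectic 2n×2n matrix S and positive real numbers λ_1, …, λ_n such that SᵀMS is the block diagonal matrix [[Λ, 0],[0, Λ]] with Λ = diag(λ_1, …, λ_n). -/
open Matrix MeasureTheory
open scoped ComplexOrder

noncomputable section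

section Auxiliary

open Module Submodule
open scoped RealInnerProductSpace

/-- Normal form of an injective skew-adjoint endomorphism of a real inner product space of
dimension `2 n`. -/
lemma skew_onb : ∀ (n : ℕ) (E : Type) [NormedAddCommGroup E] [InnerProductSpace ℝ E]
    [FiniteDimensional ℝ E], finrank ℝ E = 2 * n → ∀ (f : E →ₗ[ℝ] E),
    (∀ x y : E, ⟪f x, y⟫ = -⟪x, f y⟫) → (∀ x, f x = 0 → x = 0) →
    ∃ (b : OrthonormalBasis (Fin n ⊕ Fin n) ℝ E) (d : Fin n → ℝ),
      (∀ j, 0 < d j) ∧ (∀ j, f (b (Sum.inl j)) = d j • b (Sum.inr j)) ∧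
      (∀ j, f (b (Sum.inr j)) = -(d j) • b (Sum.inl j)) := by
  intro n
  induction n with
  | zero =>
    intro E _ _ _ hdim f hskew hinj
    have h0 : finrank ℝ E = 0 := by simpa using hdim
    haveI : IsEmpty (Fin (finrank ℝ E)) := by rw [h0]; infer_instance
    exact ⟨(stdOrthonormalBasis ℝ E).reindex (Equiv.equivOfIsEmpty _ _), Fin.elim0,
      fun j => j.elim0, fun j => j.elim0, fun j => j.elim0⟩
  | succ n ih =>
    intro E _ _ _ hdim f hskew hinj
    -- the symmetric positive operator g = -(f ∘ f)
    set g : E →ₗ[ℝ] E := -(f ∘ₗ f) with hg_def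
    have hginner : ∀ u v : E, ⟪g u, v⟫ = ⟪f u, f v⟫ := by
      intro u v
      have h1 := hskew (f u) v
      simp only [g, LinearMap.neg_apply, LinearMap.comp_apply, inner_neg_left, h1, neg_neg]
    have hg : g.IsSymmetric := by
      intro u v
      rw [hginner u v]
      have h2 := hskew u (f v)
      have : ⟪u, g v⟫ = ⟪f u, f v⟫ := by
        simp only [g, LinearMap.neg_apply, LinearMap.comp_apply, inner_neg_right]
        rw [← h2]
      rw [this]
    -- an eigenvector
    have i0 : Fin (2 * (n + 1)) := ⟨0, by omega⟩
    set x : E := hg.eigenvectorBasis hdim i0 with hx_def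
    set μ : ℝ := hg.eigenvalues hdim i0 with hμ_def
    have hgx : g x = μ • x := by
      have := hg.apply_eigenvectorBasis hdim i0
      rwa [RCLike.real_smul_eq_coe_smul (K := ℝ)] at this
    have hx1 : ‖x‖ = 1 := (hg.eigenvectorBasis hdim).orthonormal.1 i0
    have hxx : ⟪x, x⟫ = (1:ℝ) := by
      rw [real_inner_self_eq_norm_mul_norm, hx1]; norm_num
    have hxne : x ≠ 0 := by
      intro h; rw [h] at hx1; simp at hx1
    have hfxne : f x ≠ 0 := fun h => hxne (hinj x h)
    have hμfx : ⟪f x, f x⟫ = μ := by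
      rw [← hginner x x, hgx, real_inner_smul_left, hxx, mul_one]
    have hμ : 0 < μ := by
      rw [← hμfx]
      exact lt_of_le_of_ne real_inner_self_nonneg
        (fun h => hfxne (inner_self_eq_zero.mp h.symm))
    set r : ℝ := Real.sqrt μ with hr_def
    have hr : 0 < r := Real.sqrt_pos.mpr hμ
    have hr2 : r * r = μ := Real.mul_self_sqrt hμ.le
    set y : E := r⁻¹ • f x with hy_def
    have hfx_eq : f x = r • y := by
      rw [hy_def, smul_smul, mul_inv_cancel₀ hr.ne', one_smul]
    have hffx : f (f x) = -(μ • x) := by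
      have : f (f x) = -(g x) := by simp [g]
      rw [this, hgx]
    have hfy : f y = -r • x := by
      rw [hy_def, LinearMap.map_smul, hffx, smul_neg, smul_smul]
      rw [show r⁻¹ * μ = r by rw [← hr2]; field_simp]
      rw [neg_smul]
    have hy1 : ‖y‖ = 1 := by
      have hnfx : ‖f x‖ = r := by
        have : ‖f x‖ * ‖f x‖ = μ := by
          rw [← hμfx, real_inner_self_eq_norm_mul_norm]
        nlinarith [norm_nonneg (f x), Real.sqrt_nonneg μ]
      rw [hy_def, norm_smul, hnfx, Real.norm_eq_abs, abs_of_pos (inv_pos.mpr hr)]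
      exact inv_mul_cancel₀ hr.ne'
    have hyy : ⟪y, y⟫ = (1:ℝ) := by
      rw [real_inner_self_eq_norm_mul_norm, hy1]; norm_num
    have hxy : ⟪x, y⟫ = (0:ℝ) := by
      have h1 := hskew x x
      have h2 : ⟪x, f x⟫ = (0:ℝ) := by
        have := real_inner_comm (f x) x
        nlinarith [hskew x x]
      rw [hy_def, real_inner_smul_right, h2, mul_zero]
    -- the orthogonal complement
    set W : Submodule ℝ E := ((ℝ ∙ x) ⊔ (ℝ ∙ y))ᗮ with hW_def
    have hmemW : ∀ w : E, w ∈ W ↔ ⟪x, w⟫ = 0 ∧ ⟪y, w⟫ = 0 := by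
      intro w
      rw [hW_def, ← Submodule.inf_orthogonal]
      simp [Submodule.mem_inf, Submodule.mem_orthogonal_singleton_iff_inner_right]
    have hWinv : ∀ w ∈ W, f w ∈ W := by
      intro w hw
      rw [hmemW] at hw
      rw [hmemW]
      constructor
      · have h1 := hskew x w
        have h2 : ⟪f x, w⟫ = (0:ℝ) := by
          rw [hfx_eq, real_inner_smul_left, hw.2, mul_zero]
        rw [← neg_eq_zero, ← h1, h2]
      · have h1 := hskew y w
        have h2 : ⟪f y, w⟫ = (0:ℝ) := by
          rw [hfy, real_inner_smul_left, hw.1]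
          simp
        rw [← neg_eq_zero, ← h1, h2]
    -- dimension count
    have honxy : Orthonormal ℝ ![x, y] := by
      rw [orthonormal_iff_ite]
      intro i j
      fin_cases i <;> fin_cases j <;>
        simp only [Matrix.cons_val_zero, Matrix.cons_val_one, Matrix.head_cons] <;>
        norm_num [hxx, hyy, hxy, real_inner_comm x y, hx1, hy1]
    have hspan2 : finrank ℝ ↥((ℝ ∙ x) ⊔ (ℝ ∙ y)) = 2 := by
      have hrange : Set.range ![x, y] = {x, y} := by
        simp [Matrix.range_cons, Matrix.range_empty, Set.pair_comm y x]
      have hsup : ((ℝ ∙ x) ⊔ (ℝ ∙ y)) = span ℝ (Set.range ![x, y]) := by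
        rw [hrange]
        rw [show ({x, y} : Set E) = insert x {y} from rfl, Submodule.span_insert]
      rw [hsup, finrank_span_eq_card honxy.linearIndependent]
      simp
    have hWrank : finrank ℝ ↥W = 2 * n := by
      have := Submodule.finrank_add_finrank_orthogonal (K := ((ℝ ∙ x) ⊔ (ℝ ∙ y))) (𝕜 := ℝ)
      rw [hspan2, hdim, ← hW_def] at this
      omega
    -- restrict f to W and apply the induction hypothesis
    set fW : ↥W →ₗ[ℝ] ↥W := f.restrict hWinv with hfW_def
    have hfW_apply : ∀ w : ↥W, (fW w : E) = f w := fun w => rfl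
    have hskewW : ∀ u v : ↥W, ⟪fW u, v⟫ = -⟪u, fW v⟫ := by
      intro u v
      rw [Submodule.coe_inner, Submodule.coe_inner, hfW_apply, hfW_apply]
      exact hskew u v
    have hinjW : ∀ w : ↥W, fW w = 0 → w = 0 := by
      intro w hw
      have : f (w : E) = 0 := by
        rw [← hfW_apply, hw]; rfl
      exact Subtype.ext (hinj _ this)
    obtain ⟨b', d', hd', hb1', hb2'⟩ := ih ↥W hWrank fW hskewW hinjW
    -- combine into a basis of E
    set v : Fin (n + 1) ⊕ Fin (n + 1) → E :=
      Sum.elim (Fin.cons x fun j => (b' (Sum.inl j) : E))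
        (Fin.cons y fun j => (b' (Sum.inr j) : E)) with hv_def
    have hWx : ∀ k, ⟪x, (b' k : E)⟫ = (0:ℝ) := fun k => ((hmemW _).1 (b' k).2).1
    have hWy : ∀ k, ⟪y, (b' k : E)⟫ = (0:ℝ) := fun k => ((hmemW _).1 (b' k).2).2
    have hbx : ∀ k, ⟪(b' k : E), x⟫ = (0:ℝ) := fun k => by
      rw [real_inner_comm]; exact hWx k
    have hby : ∀ k, ⟪(b' k : E), y⟫ = (0:ℝ) := fun k => by
      rw [real_inner_comm]; exact hWy k
    have hyx : ⟪y, x⟫ = (0:ℝ) := by rw [real_inner_comm]; exact hxy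
    have hb'inner : ∀ k l, ⟪(b' k : E), (b' l : E)⟫ = if k = l then (1:ℝ) else 0 := by
      intro k l
      rw [← Submodule.coe_inner]
      exact orthonormal_iff_ite.mp b'.orthonormal k l
    have honv : Orthonormal ℝ v := by
      rw [orthonormal_iff_ite]
      rintro (i | i) (j | j) <;>
        simp only [hv_def, Sum.elim_inl, Sum.elim_inr] <;>
        refine Fin.cases ?_ (fun i' => ?_) i <;>
        refine Fin.cases ?_ (fun j' => ?_) j <;>
        simp [Fin.cons_zero, Fin.cons_succ, hxx, hyy, hxy, hyx, hWx, hWy, hbx, hby,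
          hb'inner, Fin.succ_ne_zero, (Fin.succ_ne_zero _).symm, Fin.succ_inj, hx1, hy1]
    have hcard : Fintype.card (Fin (n + 1) ⊕ Fin (n + 1)) = finrank ℝ E := by
      simp [hdim]; omega
    set bas := basisOfLinearIndependentOfCardEqFinrank honv.linearIndependent hcard with hbas_def
    have hbas : ⇑bas = v := coe_basisOfLinearIndependentOfCardEqFinrank _ _
    set b : OrthonormalBasis (Fin (n + 1) ⊕ Fin (n + 1)) ℝ E :=
      bas.toOrthonormalBasis (by rw [hbas]; exact honv) with hb_def
    have hb : ⇑b = v := by rw [hb_def, Basis.coe_toOrthonormalBasis, hbas]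
    refine ⟨b, Fin.cons r d', ?_, ?_, ?_⟩
    · intro j
      refine Fin.cases ?_ (fun j' => ?_) j
      · simpa using hr
      · simpa using hd' j'
    · intro j
      rw [congrFun hb (Sum.inl j), congrFun hb (Sum.inr j)]
      refine Fin.cases ?_ (fun j' => ?_) j
      · simpa [hv_def] using hfx_eq
      · simp only [hv_def, Sum.elim_inl, Sum.elim_inr, Fin.cons_succ]
        rw [← hfW_apply, hb1' j']
        simp
    · intro j
      rw [congrFun hb (Sum.inl j), congrFun hb (Sum.inr j)]
      refine Fin.cases ?_ (fun j' => ?_) j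
      · simpa [hv_def] using hfy
      · simp only [hv_def, Sum.elim_inl, Sum.elim_inr, Fin.cons_succ]
        rw [← hfW_apply, hb2' j']
        simp

lemma skew_matrix {n : ℕ} (K : Matrix (Fin n ⊕ Fin n) (Fin n ⊕ Fin n) ℝ)
    (hskew : Kᵀ = -K) (hK : ∀ x, K *ᵥ x = 0 → x = 0) :
    ∃ (O : Matrix (Fin n ⊕ Fin n) (Fin n ⊕ Fin n) ℝ) (d : Fin n → ℝ),
      Oᵀ * O = 1 ∧ (∀ j, 0 < d j) ∧
      Oᵀ * K * O = fromBlocks 0 (-(diagonal d)) (diagonal d) 0 := by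
  classical
  set f : EuclideanSpace ℝ (Fin n ⊕ Fin n) →ₗ[ℝ] EuclideanSpace ℝ (Fin n ⊕ Fin n) :=
    Matrix.toEuclideanLin K with hf_def
  have hfcoord : ∀ (x : EuclideanSpace ℝ (Fin n ⊕ Fin n)) (i), f x i = (K *ᵥ x) i := by
    intro x i
    simp [hf_def, Matrix.toEuclideanLin_apply]
  have hinner : ∀ u w : EuclideanSpace ℝ (Fin n ⊕ Fin n), ⟪u, w⟫ = ∑ i, u i * w i := by
    intro u w
    rw [PiLp.inner_apply]
    simp [RCLike.inner_apply, conj_trivial, mul_comm]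
  have hdim : finrank ℝ (EuclideanSpace ℝ (Fin n ⊕ Fin n)) = 2 * n := by
    rw [finrank_euclideanSpace]
    simp
    ring
  have hskewf : ∀ u w : EuclideanSpace ℝ (Fin n ⊕ Fin n), ⟪f u, w⟫ = -⟪u, f w⟫ := by
    intro u w
    rw [hinner, hinner]
    have h1 : ∑ i, f u i * w i = (K *ᵥ u) ⬝ᵥ (w : (Fin n ⊕ Fin n) → ℝ) := by
      simp only [hfcoord, dotProduct]
    have h2 : ∑ i, u i * f w i = (u : (Fin n ⊕ Fin n) → ℝ) ⬝ᵥ (K *ᵥ w) := by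
      simp only [hfcoord, dotProduct]
    rw [h1, h2]
    rw [← Matrix.vecMul_transpose, ← Matrix.dotProduct_mulVec, hskew, Matrix.neg_mulVec,
      dotProduct_neg]
  have hinjf : ∀ x : EuclideanSpace ℝ (Fin n ⊕ Fin n), f x = 0 → x = 0 := by
    intro x hx
    have h0 : K *ᵥ (x : (Fin n ⊕ Fin n) → ℝ) = 0 := by
      funext i
      rw [← hfcoord, hx]
      rfl
    simpa using hK _ h0
  obtain ⟨b, d, hd, hb1, hb2⟩ := skew_onb n (EuclideanSpace ℝ (Fin n ⊕ Fin n)) hdim f hskewf hinjf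
  set O : Matrix (Fin n ⊕ Fin n) (Fin n ⊕ Fin n) ℝ := Matrix.of fun i j => b j i with hO_def
  have hOentry : ∀ i j, O i j = b j i := fun i j => rfl
  have hOO : Oᵀ * O = 1 := by
    ext i j
    have h : (∑ k, b i k * b j k) = ⟪b i, b j⟫ := (hinner _ _).symm
    simp only [Matrix.mul_apply, Matrix.transpose_apply, hOentry, Matrix.one_apply]
    rw [h, orthonormal_iff_ite.mp b.orthonormal i j]
  have hKO : ∀ i j, (Oᵀ * K * O) i j = ⟪b i, f (b j)⟫ := by
    intro i j
    rw [Matrix.mul_assoc, hinner]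
    simp only [Matrix.mul_apply, Matrix.transpose_apply, hOentry, hfcoord, Matrix.mulVec,
      dotProduct]
  refine ⟨O, d, hOO, hd, ?_⟩
  ext i j
  rcases j with j | j
  · have h1 : f (b (Sum.inl j)) = d j • b (Sum.inr j) := hb1 j
    rw [hKO, h1, real_inner_smul_right, orthonormal_iff_ite.mp b.orthonormal i (Sum.inr j)]
    rcases i with i | i
    · simp
    · rw [Matrix.fromBlocks_apply₂₁]
      by_cases h : i = j
      · subst h; simp
      · simp [Matrix.diagonal_apply_ne _ h, h, Ne.symm h]
  · have h2 : f (b (Sum.inr j)) = -(d j) • b (Sum.inl j) := hb2 j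
    rw [hKO, h2, real_inner_smul_right, orthonormal_iff_ite.mp b.orthonormal i (Sum.inl j)]
    rcases i with i | i
    · rw [Matrix.fromBlocks_apply₁₂]
      by_cases h : j = i
      · subst h; simp
      · have h' : i ≠ j := fun hh => h hh.symm
        rw [if_neg (by simpa using h'), mul_zero, Matrix.neg_apply,
          Matrix.diagonal_apply_ne _ h', neg_zero]
    · simp

end Auxiliary

/-- **Williamson's symplectic diagonalization theorem.** Every real symmetric
positive definite `2n × 2n` matrix `M` can be diagonalized as `Sᵀ M S = [[Λ, 0], [0, Λ]]` with `S`
symplectic and `Λ = diag(λ₁, …, λₙ)`, `λⱼ > 0`. -/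
theorem stmt4 {n : ℕ} (M : Matrix (Fin n ⊕ Fin n) (Fin n ⊕ Fin n) ℝ)
    (hMSymm : M.IsSymm) (hMPos : M.PosDef) :
    ∃ (S : Matrix (Fin n ⊕ Fin n) (Fin n ⊕ Fin n) ℝ) (lam : Fin n → ℝ),
      IsSymplectic S ∧ (∀ j, 0 < lam j) ∧
        Sᵀ * M * S = Matrix.fromBlocks (Matrix.diagonal lam) 0 0 (Matrix.diagonal lam) := by
  classical
  set A : Matrix (Fin n ⊕ Fin n) (Fin n ⊕ Fin n) ℝ := (open scoped MatrixOrder in CFC.sqrt M) with hA_def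
  have hAsq : A * A = M := open scoped MatrixOrder in CFC.sqrt_mul_sqrt_self M hMPos.posSemidef.nonneg
  have hAherm : A.IsHermitian := open scoped MatrixOrder in (CFC.sqrt_nonneg M).isSelfAdjoint
  have hAsymm : Aᵀ = A := by
    rw [← Matrix.conjTranspose_eq_transpose_of_trivial]
    exact hAherm
  have hMdet : M.det ≠ 0 := ne_of_gt hMPos.det_pos
  have hAdet : IsUnit A.det := by
    rw [isUnit_iff_ne_zero]
    intro h
    apply hMdet
    rw [← hAsq, Matrix.det_mul, h, mul_zero]
  have hAiT : (A⁻¹)ᵀ = A⁻¹ := by rw [Matrix.transpose_nonsing_inv, hAsymm]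
  have hAAi : A * A⁻¹ = 1 := Matrix.mul_nonsing_inv A hAdet
  have hAiA : A⁻¹ * A = 1 := Matrix.nonsing_inv_mul A hAdet
  -- the standard symplectic form
  have hJT : (stdJ n)ᵀ = -(stdJ n) := by
    rw [stdJ, Matrix.fromBlocks_transpose, Matrix.fromBlocks_neg]
    simp
  have hJdet : IsUnit (stdJ n).det := by
    have hJJ : stdJ n * stdJ n = -1 := by
      rw [stdJ, Matrix.fromBlocks_multiply,
        show (-1 : Matrix (Fin n ⊕ Fin n) (Fin n ⊕ Fin n) ℝ) =
          -(fromBlocks (1 : Matrix (Fin n) (Fin n) ℝ) 0 0 (1 : Matrix (Fin n) (Fin n) ℝ)) by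
            rw [Matrix.fromBlocks_one],
        Matrix.fromBlocks_neg]
      simp
    have h1 : (stdJ n).det * (stdJ n).det = 1 := by
      rw [← Matrix.det_mul, hJJ]
      rw [show (-1 : Matrix (Fin n ⊕ Fin n) (Fin n ⊕ Fin n) ℝ) = (-1 : ℝ) • 1 by simp]
      rw [Matrix.det_smul, Matrix.det_one]
      simp only [Fintype.card_sum, Fintype.card_fin, smul_eq_mul, mul_one]
      exact Even.neg_one_pow ⟨n, rfl⟩
    rw [isUnit_iff_ne_zero]
    intro h
    rw [h, mul_zero] at h1
    exact zero_ne_one h1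
  -- the skew matrix to be normalized
  set B : Matrix (Fin n ⊕ Fin n) (Fin n ⊕ Fin n) ℝ := A⁻¹ * stdJ n * A⁻¹ with hB_def
  have hBT : Bᵀ = -B := by
    rw [hB_def, Matrix.transpose_mul, Matrix.transpose_mul, hAiT, hJT,
      Matrix.neg_mul, Matrix.mul_neg, ← Matrix.mul_assoc]
  have hBdet : IsUnit B.det := by
    rw [hB_def, Matrix.det_mul, Matrix.det_mul]
    exact ((Matrix.isUnit_nonsing_inv_det A hAdet).mul hJdet).mul
      (Matrix.isUnit_nonsing_inv_det A hAdet)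
  have hKinj : ∀ x, (-B) *ᵥ x = 0 → x = 0 := by
    intro x hx
    rw [Matrix.neg_mulVec, neg_eq_zero] at hx
    have : B⁻¹ *ᵥ (B *ᵥ x) = x := by
      rw [Matrix.mulVec_mulVec, Matrix.nonsing_inv_mul B hBdet, Matrix.one_mulVec]
    rw [← this, hx, Matrix.mulVec_zero]
  have hKT : (-B)ᵀ = -(-B) := by rw [Matrix.transpose_neg, hBT, neg_neg]
  obtain ⟨O, d, hOO, hd, hKO⟩ := skew_matrix (-B) hKT hKinj
  have hBO : Oᵀ * B * O = fromBlocks 0 (diagonal d) (-(diagonal d)) 0 := by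
    have h1 : Oᵀ * (-B) * O = -(Oᵀ * B * O) := by
      rw [Matrix.mul_neg, Matrix.neg_mul]
    rw [h1] at hKO
    have h2 := congrArg (fun X : Matrix (Fin n ⊕ Fin n) (Fin n ⊕ Fin n) ℝ => -X) hKO
    simp only [neg_neg] at h2
    rw [h2, Matrix.fromBlocks_neg]
    simp
  set e : Fin n → ℝ := fun j => (Real.sqrt (d j))⁻¹ with he_def
  set P : Matrix (Fin n ⊕ Fin n) (Fin n ⊕ Fin n) ℝ :=
    fromBlocks (diagonal e) 0 0 (diagonal e) with hP_def
  set S : Matrix (Fin n ⊕ Fin n) (Fin n ⊕ Fin n) ℝ := A⁻¹ * O * P with hS_def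
  set lam : Fin n → ℝ := fun j => (d j)⁻¹ with hlam_def
  have hPT : Pᵀ = P := by
    rw [hP_def, Matrix.fromBlocks_transpose, Matrix.diagonal_transpose, Matrix.transpose_zero]
  have hST : Sᵀ = P * (Oᵀ * A⁻¹) := by
    rw [hS_def, Matrix.transpose_mul, Matrix.transpose_mul, hPT, hAiT]
  have key : ∀ X : Matrix (Fin n ⊕ Fin n) (Fin n ⊕ Fin n) ℝ,
      Sᵀ * X * S = P * (Oᵀ * (A⁻¹ * X * A⁻¹) * O) * P := by
    intro X
    rw [hST, hS_def]
    simp only [Matrix.mul_assoc]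
  have hede : diagonal e * (diagonal d * diagonal e) = 1 := by
    ext i j
    rw [Matrix.diagonal_mul_diagonal, Matrix.diagonal_mul_diagonal]
    by_cases h : i = j
    · subst h
      rw [Matrix.diagonal_apply_eq, Matrix.one_apply_eq]
      have hsp : 0 < Real.sqrt (d i) := Real.sqrt_pos.mpr (hd i)
      have hss : Real.sqrt (d i) * Real.sqrt (d i) = d i := Real.mul_self_sqrt (hd i).le
      simp only [Pi.mul_apply, he_def]
      field_simp
      rw [sq, hss]
    · rw [Matrix.diagonal_apply_ne _ h, Matrix.one_apply_ne h]
  have hee : diagonal e * diagonal e = diagonal lam := by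
    ext i j
    rw [Matrix.diagonal_mul_diagonal]
    by_cases h : i = j
    · subst h
      rw [Matrix.diagonal_apply_eq, Matrix.diagonal_apply_eq]
      simp only [Pi.mul_apply, he_def, hlam_def]
      rw [← mul_inv, Real.mul_self_sqrt (hd i).le]
    · rw [Matrix.diagonal_apply_ne _ h, Matrix.diagonal_apply_ne _ h]
  have hsympl : Sᵀ * stdJ n * S = stdJ n := by
    rw [key (stdJ n), show A⁻¹ * stdJ n * A⁻¹ = B from hB_def.symm, hBO, hP_def,
      Matrix.fromBlocks_multiply, Matrix.fromBlocks_multiply]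
    simp only [Matrix.mul_zero, Matrix.zero_mul, Matrix.mul_neg, Matrix.neg_mul,
      add_zero, zero_add, neg_zero, Matrix.mul_assoc]
    rw [hede, stdJ]
  have hAMA : A⁻¹ * M * A⁻¹ = 1 := by
    rw [← hAsq]
    have h1 : A⁻¹ * (A * A) * A⁻¹ = (A⁻¹ * A) * (A * A⁻¹) := by
      simp only [Matrix.mul_assoc]
    rw [h1, hAiA, hAAi, Matrix.one_mul]
  have hSMS : Sᵀ * M * S = fromBlocks (diagonal lam) 0 0 (diagonal lam) := by
    rw [key M, hAMA, Matrix.mul_one, hOO, Matrix.mul_one, hP_def, Matrix.fromBlocks_multiply]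
    simp only [Matrix.mul_zero, Matrix.zero_mul, add_zero, zero_add, hee]
  exact ⟨S, lam, hsympl, fun j => inv_pos.mpr (hd j), hSMS⟩
end
end

section
/- Let M be a real symmetric positive definite 2n×2n matrix and suppose SᵀMS = [[Λ, 0],[0, Λ]] for some real symplectic matrix S, where Λ = diag(λ_1, …, λ_n) with all λ_j > 0. Then the complex eigenvalues of the matrix JM are precisely the purely imaginary numbers ±iλ_1, …, ±iλ_n; equivalently, the characteristic polynomial of JM (over ℂ) equals ∏_{j=1}^n (t² + λ_j²). -/
open Matrix MeasureTheory
open scoped ComplexOrder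

noncomputable section

open Polynomial in
/-- Similar matrices have equal characteristic polynomials. -/
lemma charpoly_conj_aux {m : Type*} [Fintype m] [DecidableEq m] {R : Type*} [CommRing R]
    (P Q A : Matrix m m R) (h : P * Q = 1) : (P * A * Q).charpoly = A.charpoly := by
  have hPQ : (P.map C) * (Q.map C) = 1 := by
    rw [← Matrix.map_mul (f := (C : R →+* R[X])), h]
    simp
  have hc : Matrix.charmatrix (P * A * Q) = (P.map C) * Matrix.charmatrix A * (Q.map C) := by
    rw [Matrix.charmatrix, Matrix.charmatrix]
    have hmap : ((C : R →+* R[X]).mapMatrix (P * A * Q) : Matrix m m R[X])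
        = P.map C * ((C : R →+* R[X]).mapMatrix A) * Q.map C := by
      simp [RingHom.mapMatrix_apply, Matrix.map_mul]
    rw [hmap, Matrix.mul_sub, Matrix.sub_mul]
    congr 1
    have : (Matrix.scalar m (X : R[X])) = (X : R[X]) • (1 : Matrix m m R[X]) := by
      simp [Matrix.scalar, Matrix.smul_one_eq_diagonal]
    rw [this, Matrix.mul_smul, Matrix.mul_one, Matrix.smul_mul, hPQ]
  rw [Matrix.charpoly, Matrix.charpoly, hc, Matrix.det_mul, Matrix.det_mul]
  have : (P.map C).det * Matrix.det (Q.map C) = 1 := by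
    rw [← Matrix.det_mul, hPQ, Matrix.det_one]
  calc (P.map C).det * A.charmatrix.det * (Q.map C).det
      = A.charmatrix.det * ((P.map C).det * (Q.map C).det) := by ring
    _ = A.charmatrix.det := by rw [this, mul_one]

open Polynomial in
lemma charpoly_diagonal_aux {m : Type*} [Fintype m] [DecidableEq m] {R : Type*} [CommRing R]
    (d : m → R) : (Matrix.diagonal d).charpoly = ∏ i, (X - C (d i)) := by
  have : Matrix.charmatrix (Matrix.diagonal d) = Matrix.diagonal (fun i => X - C (d i)) := by
    ext i j
    by_cases h : i = j
    · subst h; simp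
    · simp [h, Matrix.diagonal_apply_ne _ h]
  rw [Matrix.charpoly, this, Matrix.det_diagonal]

/-- If `M` is symmetric positive definite with symplectic diagonalization
`Sᵀ M S = [[Λ, 0], [0, Λ]]`, `Λ = diag(λ₁, …, λₙ)`, then the complex eigenvalues of `JM` are
precisely `±iλ₁, …, ±iλₙ`: the characteristic polynomial of `JM` over `ℂ` equals
`∏ⱼ (t² + λⱼ²)`. -/
theorem stmt5 {n : ℕ} (M S : Matrix (Fin n ⊕ Fin n) (Fin n ⊕ Fin n) ℝ)
    (hMSymm : M.IsSymm) (hMPos : M.PosDef)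
    (lam : Fin n → ℝ) (hlam : ∀ j, 0 < lam j) (hS : IsSymplectic S)
    (hdiag : Sᵀ * M * S = Matrix.fromBlocks (Matrix.diagonal lam) 0 0 (Matrix.diagonal lam)) :
    ((stdJ n * M).map Complex.ofReal).charpoly
      = ∏ j : Fin n, (Polynomial.X ^ 2 + Polynomial.C (((lam j : ℝ) : ℂ) ^ 2)) := by
  classical
  set f : ℝ →+* ℂ := Complex.ofRealHom with hf
  set Jc : Matrix (Fin n ⊕ Fin n) (Fin n ⊕ Fin n) ℂ := (stdJ n).map f with hJc
  set Mc : Matrix (Fin n ⊕ Fin n) (Fin n ⊕ Fin n) ℂ := M.map f with hMc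
  set Sc : Matrix (Fin n ⊕ Fin n) (Fin n ⊕ Fin n) ℂ := S.map f with hSc
  have hmap_eq : (stdJ n * M).map Complex.ofReal = Jc * Mc := by
    rw [hJc, hMc, ← Matrix.map_mul]
    rfl
  have hS_c : Scᵀ * Jc * Sc = Jc := by
    rw [hSc, hJc, ← Matrix.transpose_map, ← Matrix.map_mul, ← Matrix.map_mul, hS]
  set lc : Fin n → ℂ := fun j => (lam j : ℂ) with hlc
  set Dc : Matrix (Fin n ⊕ Fin n) (Fin n ⊕ Fin n) ℂ :=
    Matrix.fromBlocks (Matrix.diagonal lc) 0 0 (Matrix.diagonal lc) with hDc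
  have hdiag_c : Scᵀ * Mc * Sc = Dc := by
    rw [hSc, hMc, ← Matrix.transpose_map, ← Matrix.map_mul, ← Matrix.map_mul, hdiag, hDc]
    simp [Matrix.fromBlocks_map, Matrix.diagonal_map, hlc, hf]
  have hJcD : Jc = Matrix.fromBlocks 0 1 (-1) 0 := by
    rw [hJc, stdJ, Matrix.fromBlocks_map]
    ext a b
    rcases a with a | a <;> rcases b with b | b <;>
      simp [Matrix.map_apply, Matrix.one_apply, Matrix.neg_apply, apply_ite f]
  have hJJ : Jc * Jc = -1 := by
    rw [hJcD, Matrix.fromBlocks_multiply]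
    ext a b
    rcases a with a | a <;> rcases b with b | b <;> simp [Matrix.one_apply]
  have hScUnit : IsUnit Sc.det := by
    have h1 : (-(Jc * Scᵀ * Jc)) * Sc = 1 := by
      have h2 : Jc * (Scᵀ * Jc * Sc) = Jc * Jc := by rw [hS_c]
      rw [Matrix.neg_mul,
        show Jc * Scᵀ * Jc * Sc = Jc * (Scᵀ * Jc * Sc) by noncomm_ring, h2, hJJ, neg_neg]
    exact Matrix.isUnit_det_of_left_inverse h1
  have hSS : Sc * Sc⁻¹ = 1 := Matrix.mul_nonsing_inv Sc hScUnit
  have hSJS : Sc * Jc * Scᵀ = Jc := by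
    have h1 : (-(Jc * Scᵀ * Jc)) * Sc = 1 := by
      have h2 : Jc * (Scᵀ * Jc * Sc) = Jc * Jc := by rw [hS_c]
      rw [Matrix.neg_mul,
        show Jc * Scᵀ * Jc * Sc = Jc * (Scᵀ * Jc * Sc) by noncomm_ring, h2, hJJ, neg_neg]
    have h2 : Sc * (-(Jc * Scᵀ * Jc)) = 1 := mul_eq_one_comm.mp h1
    have h3 : Sc * Jc * Scᵀ * Jc = -1 := by
      have h4 := congrArg Neg.neg h2
      rw [Matrix.mul_neg, neg_neg] at h4
      rw [show Sc * Jc * Scᵀ * Jc = Sc * (Jc * Scᵀ * Jc) by noncomm_ring, h4]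
    calc Sc * Jc * Scᵀ = Sc * Jc * Scᵀ * Jc * (-Jc) := by
          rw [Matrix.mul_assoc (Sc * Jc * Scᵀ) Jc (-Jc), Matrix.mul_neg, hJJ, neg_neg,
            Matrix.mul_one]
      _ = Jc := by rw [h3]; simp
  have hkey : Jc * Mc = Sc * (Jc * Dc) * Sc⁻¹ := by
    rw [← hdiag_c]
    symm
    calc Sc * (Jc * (Scᵀ * Mc * Sc)) * Sc⁻¹
        = (Sc * Jc * Scᵀ) * Mc * (Sc * Sc⁻¹) := by noncomm_ring
      _ = Jc * Mc := by rw [hSJS, hSS, Matrix.mul_one]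
  -- diagonalize Jc * Dc over ℂ
  set T : Matrix (Fin n ⊕ Fin n) (Fin n ⊕ Fin n) ℂ :=
    Matrix.fromBlocks 1 1 (Matrix.diagonal fun _ => -Complex.I)
      (Matrix.diagonal fun _ => Complex.I) with hT
  set T' : Matrix (Fin n ⊕ Fin n) (Fin n ⊕ Fin n) ℂ :=
    Matrix.fromBlocks (Matrix.diagonal fun _ => (1/2 : ℂ))
      (Matrix.diagonal fun _ => Complex.I/2)
      (Matrix.diagonal fun _ => (1/2 : ℂ))
      (Matrix.diagonal fun _ => -(Complex.I/2)) with hT'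
  set Δ : Matrix (Fin n ⊕ Fin n) (Fin n ⊕ Fin n) ℂ :=
    Matrix.fromBlocks (Matrix.diagonal fun j => -Complex.I * lc j) 0 0
      (Matrix.diagonal fun j => Complex.I * lc j) with hΔ
  have hTT' : T * T' = 1 := by
    rw [hT, hT', Matrix.fromBlocks_multiply]
    ext a b
    rcases a with a | a <;> rcases b with b | b <;>
      simp [Matrix.diagonal_apply, Matrix.one_apply] <;>
      split_ifs with h <;>
      first
        | rfl
        | (norm_num; done)
        | linear_combination (-1 : ℂ) * Complex.I_mul_I
  have hJDdiag : Jc * Dc = T * Δ * T' := by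
    rw [hJcD, hDc, hT, hΔ, hT', Matrix.fromBlocks_multiply, Matrix.fromBlocks_multiply,
      Matrix.fromBlocks_multiply]
    ext a b
    rcases a with a | a <;> rcases b with b | b <;>
      simp [Matrix.diagonal_apply] <;>
      split_ifs with h <;>
      first
        | rfl
        | ring1
        | linear_combination (lc a) * Complex.I_mul_I
        | linear_combination (-(lc a)) * Complex.I_mul_I
  rw [hmap_eq, hkey, charpoly_conj_aux Sc Sc⁻¹ _ hSS, hJDdiag,
    charpoly_conj_aux T T' _ hTT', hΔ, Matrix.charpoly_fromBlocks_zero₁₂,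
    charpoly_diagonal_aux, charpoly_diagonal_aux, Finset.prod_mul_distrib.symm]
  apply Finset.prod_congr rfl
  intro j _
  have hcoe : ((lam j : ℝ) : ℂ) = lc j := rfl
  rw [hcoe]
  have h1 : (-Complex.I * lc j) * (Complex.I * lc j) = lc j ^ 2 := by
    linear_combination (-(lc j ^ 2)) * Complex.I_mul_I
  have expand : (Polynomial.X - Polynomial.C (-Complex.I * lc j)) *
      (Polynomial.X - Polynomial.C (Complex.I * lc j))
      = Polynomial.X ^ 2
        - (Polynomial.C (-Complex.I * lc j) + Polynomial.C (Complex.I * lc j)) * Polynomial.X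
        + Polynomial.C (-Complex.I * lc j) * Polynomial.C (Complex.I * lc j) := by ring
  rw [expand, ← Polynomial.C_add, show (-Complex.I * lc j) + Complex.I * lc j = 0 by ring,
    Polynomial.C_0, zero_mul, sub_zero, ← Polynomial.C_mul, h1]
end
end

section
/- Let ℏ > 0 and let Σ be a real symmetric 2n×2n matrix, written in block coordinates z = (x,p) so that Σ_{j,j} = (ΔX_j)², Σ_{n+j,n+j} = (ΔP_j)², and Σ_{j,n+j} = Δ(X_j,P_j). If the complex Hermitian matrix Σ + (iℏ/2)J is positive definite, then all the Robertson–Schrödinger inequalities hold strictly: for every j = 1,…,n, Σ_{j,j}·Σ_{n+j,n+j} > (Σ_{j,n+j})² + ℏ²/4. -/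
open Matrix MeasureTheory
open scoped ComplexOrder

noncomputable section

/-- If `Σ` is real symmetric and the Hermitian matrix `Σ + (iℏ/2)J` is positive
definite, then all Robertson–Schrödinger inequalities hold strictly:
`Σ_{jj} Σ_{n+j,n+j} > Σ_{j,n+j}² + ℏ²/4` for all `j`. -/
theorem stmt8 {n : ℕ} (ℏ : ℝ) (hℏ : 0 < ℏ)
    (Cov : Matrix (Fin n ⊕ Fin n) (Fin n ⊕ Fin n) ℝ) (hCovSymm : Cov.IsSymm)
    (hquant : (Cov.map Complex.ofReal
        + (Complex.I * ((ℏ : ℂ) / 2)) • (stdJ n).map Complex.ofReal).PosDef) :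
    ∀ j : Fin n,
      Cov (Sum.inl j) (Sum.inl j) * Cov (Sum.inr j) (Sum.inr j)
        > Cov (Sum.inl j) (Sum.inr j) ^ 2 + ℏ ^ 2 / 4 := by
  intro j
  set M := Cov.map Complex.ofReal
      + (Complex.I * ((ℏ : ℂ) / 2)) • (stdJ n).map Complex.ofReal with hM
  set a := Cov (Sum.inl j) (Sum.inl j) with ha'
  set b := Cov (Sum.inr j) (Sum.inr j) with hb'
  set c := Cov (Sum.inl j) (Sum.inr j) with hc'
  have hcsym : Cov (Sum.inr j) (Sum.inl j) = c := hCovSymm.apply _ _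
  have hMll : M (Sum.inl j) (Sum.inl j) = (a : ℂ) := by
    simp [hM, ha', stdJ, Matrix.add_apply, Matrix.map_apply, Matrix.fromBlocks]
  have hMrr : M (Sum.inr j) (Sum.inr j) = (b : ℂ) := by
    simp [hM, hb', stdJ, Matrix.add_apply, Matrix.map_apply, Matrix.fromBlocks]
  set m : ℂ := (c : ℂ) + Complex.I * ((ℏ : ℂ) / 2) with hm'
  have hMlr : M (Sum.inl j) (Sum.inr j) = m := by
    simp [hM, hm', hc', stdJ, Matrix.add_apply, Matrix.map_apply, Matrix.fromBlocks,
      Matrix.one_apply]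
  have hMrl : M (Sum.inr j) (Sum.inl j) = star m := by
    simp [hM, hm', stdJ, Matrix.add_apply, Matrix.map_apply, Matrix.fromBlocks,
      Matrix.one_apply, hcsym, star_add, star_mul', Complex.conj_I, map_div₀,
      Complex.conj_ofReal, map_ofNat]
  -- a > 0
  have ha : 0 < a := by
    have h1 := hquant.dotProduct_mulVec_pos (x := Pi.single (Sum.inl j) (1 : ℂ))
      (by
        intro h0
        have := congrFun h0 (Sum.inl j)
        simp [Pi.single_apply] at this)
    rw [← Pi.single_star, single_dotProduct, Matrix.mulVec_single] at h1
    simp only [Pi.smul_apply, op_smul_eq_mul, Matrix.col_apply, star_one, one_mul, mul_one, hMll] at h1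
    exact Complex.zero_lt_real.mp h1
  -- key vector
  set v : (Fin n ⊕ Fin n) → ℂ :=
    Pi.single (Sum.inl j) (-m) + Pi.single (Sum.inr j) (a : ℂ) with hv
  have hvne : v ≠ 0 := by
    intro h0
    have := congrFun h0 (Sum.inr j)
    simp [hv, Pi.single_apply] at this
    exact ha.ne' this
  have h2 := hquant.dotProduct_mulVec_pos hvne
  have hmm : star m * m = (c:ℂ) ^ 2 + (ℏ:ℂ) ^ 2 / 4 := by
    simp only [hm', star_add, star_mul', Complex.star_def, Complex.conj_ofReal,
      Complex.conj_I, map_div₀, map_ofNat]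
    push_cast
    ring_nf
    rw [Complex.I_sq]
    ring
  have hQ : star v ⬝ᵥ M *ᵥ v = ((a * (a * b - (c ^ 2 + ℏ ^ 2 / 4)) : ℝ) : ℂ) := by
    rw [hv, star_add, ← Pi.single_star, ← Pi.single_star, Matrix.mulVec_add,
      Matrix.mulVec_single, Matrix.mulVec_single, add_dotProduct]
    simp only [dotProduct_add, single_dotProduct, Pi.smul_apply, op_smul_eq_mul, Matrix.col_apply,
      hMll, hMrr, hMlr, hMrl, star_neg, Complex.star_def, Complex.conj_ofReal]
    have : (starRingEnd ℂ) m = star m := rfl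
    rw [this]
    push_cast
    linear_combination (-(a:ℂ)) * hmm
  rw [hQ] at h2
  have h3 : 0 < a * (a * b - (c ^ 2 + ℏ ^ 2 / 4)) := Complex.zero_lt_real.mp h2
  nlinarith
end
end

section
/- Let ℏ > 0 and let Σ be a real symmetric 2n×2n matrix such that the complex Hermitian matrix Σ + (iℏ/2)J is positive semidefinite. Then the Robertson–Schrödinger inequalities hold: for every j = 1,…,n, Σ_{j,j}·Σ_{n+j,n+j} ≥ (Σ_{j,n+j})² + ℏ²/4. -/
open Matrix MeasureTheory
open scoped ComplexOrder

noncomputable section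

/-- If `Σ` is real symmetric and the Hermitian matrix `Σ + (iℏ/2)J` is positive
semidefinite, then the Robertson–Schrödinger inequalities hold:
`Σ_{jj} Σ_{n+j,n+j} ≥ Σ_{j,n+j}² + ℏ²/4` for all `j`. -/
theorem stmt9 {n : ℕ} (ℏ : ℝ) (hℏ : 0 < ℏ)
    (Cov : Matrix (Fin n ⊕ Fin n) (Fin n ⊕ Fin n) ℝ) (hCovSymm : Cov.IsSymm)
    (hquant : (Cov.map Complex.ofReal
        + (Complex.I * ((ℏ : ℂ) / 2)) • (stdJ n).map Complex.ofReal).PosSemidef) :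
    ∀ j : Fin n,
      Cov (Sum.inl j) (Sum.inl j) * Cov (Sum.inr j) (Sum.inr j)
        ≥ Cov (Sum.inl j) (Sum.inr j) ^ 2 + ℏ ^ 2 / 4 := by
  intro j
  set M := Cov.map Complex.ofReal
        + (Complex.I * ((ℏ : ℂ) / 2)) • (stdJ n).map Complex.ofReal with hM
  set f : Fin 2 → (Fin n ⊕ Fin n) := ![Sum.inl j, Sum.inr j] with hf
  have h2 : (M.submatrix f f).PosSemidef := hquant.submatrix f
  have hdet : 0 ≤ (M.submatrix f f).det := by
    rw [h2.isHermitian.det_eq_prod_eigenvalues]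
    apply Finset.prod_nonneg
    intro i _
    exact Complex.zero_le_real.2 (h2.eigenvalues_nonneg i)
  have hsym : Cov (Sum.inr j) (Sum.inl j) = Cov (Sum.inl j) (Sum.inr j) := by
    have := congrFun (congrFun hCovSymm (Sum.inl j)) (Sum.inr j)
    simpa [Matrix.IsSymm, Matrix.transpose_apply] using this
  have hdet' : (M.submatrix f f).det =
      ((Cov (Sum.inl j) (Sum.inl j) * Cov (Sum.inr j) (Sum.inr j)
        - (Cov (Sum.inl j) (Sum.inr j) ^ 2 + ℏ ^ 2 / 4) : ℝ) : ℂ) := by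
    rw [Matrix.det_fin_two]
    simp only [Matrix.submatrix_apply, hf, hM, Matrix.add_apply, Matrix.map_apply,
      Matrix.smul_apply, stdJ, Matrix.fromBlocks_apply₁₁, Matrix.fromBlocks_apply₁₂,
      Matrix.fromBlocks_apply₂₁, Matrix.fromBlocks_apply₂₂,
      Matrix.one_apply_eq, Matrix.zero_apply, Matrix.neg_apply, hsym,
      Matrix.cons_val_zero, Matrix.cons_val_one, Matrix.head_cons]
    push_cast
    simp only [smul_eq_mul]
    ring_nf
    rw [Complex.I_sq]
    ring
  rw [hdet'] at hdet
  have : 0 ≤ Cov (Sum.inl j) (Sum.inl j) * Cov (Sum.inr j) (Sum.inr j)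
        - (Cov (Sum.inl j) (Sum.inr j) ^ 2 + ℏ ^ 2 / 4) := by
    exact_mod_cast hdet
  linarith
end
end

section
/- Let ℏ > 0, let Σ be a real symmetric positive definite 2n×2n matrix, set M = (ℏ/2)Σ^{-1}, and let λ_1 ≥ … ≥ λ_n > 0 be the symplectic eigenvalues of M (i.e. SᵀMS = diag(λ_1,…,λ_n,λ_1,…,λ_n) for some symplectic S). If λ_j < 1 for all j, then all Robertson–Schrödinger inequalities for Σ are strict: Σ_{j,j}·Σ_{n+j,n+j} > (Σ_{j,n+j})² + ℏ²/4 for every j = 1,…,n. -/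
open Matrix MeasureTheory
open scoped ComplexOrder

noncomputable section

lemma stdJ_mul_stdJ (n : ℕ) : stdJ n * stdJ n = -1 := by
  rw [stdJ, Matrix.fromBlocks_multiply]
  rw [← Matrix.fromBlocks_one, Matrix.fromBlocks_neg]
  simp

lemma quad_stdJ {n : ℕ} (a b : (Fin n ⊕ Fin n) → ℝ) :
    a ⬝ᵥ (stdJ n *ᵥ b) = ∑ i : Fin n, (a (Sum.inl i) * b (Sum.inr i)
      - a (Sum.inr i) * b (Sum.inl i)) := by
  simp only [dotProduct, mulVec, stdJ, Fintype.sum_sum_type, Matrix.fromBlocks_apply₁₁,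
    Matrix.fromBlocks_apply₁₂, Matrix.fromBlocks_apply₂₁, Matrix.fromBlocks_apply₂₂,
    Matrix.zero_apply, Matrix.one_apply, Matrix.neg_apply, zero_mul, ite_mul, one_mul,
    Finset.sum_ite_eq, Finset.mem_univ, if_true, neg_mul, zero_add, add_zero,
    neg_zero, Finset.sum_const_zero, mul_neg, Finset.sum_neg_distrib, Finset.sum_ite_eq']
  rw [← sub_eq_add_neg, ← Finset.sum_sub_distrib]

lemma quad_blockDiag {n : ℕ} (mu : Fin n → ℝ) (a : (Fin n ⊕ Fin n) → ℝ) :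
    a ⬝ᵥ ((Matrix.fromBlocks (Matrix.diagonal mu) 0 0 (Matrix.diagonal mu)) *ᵥ a)
      = ∑ i : Fin n, mu i * (a (Sum.inl i) ^ 2 + a (Sum.inr i) ^ 2) := by
  simp only [dotProduct, mulVec, Fintype.sum_sum_type, Matrix.fromBlocks_apply₁₁,
    Matrix.fromBlocks_apply₁₂, Matrix.fromBlocks_apply₂₁, Matrix.fromBlocks_apply₂₂,
    Matrix.zero_apply, zero_mul, Matrix.diagonal_apply, ite_mul, Finset.sum_ite_eq,
    Finset.mem_univ, if_true, zero_add, add_zero, Finset.sum_const_zero, Finset.sum_ite_eq']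
  rw [← Finset.sum_add_distrib]
  exact Finset.sum_congr rfl fun i _ => by ring

/-- Let `Σ` be symmetric positive definite, `M = (ℏ/2)Σ⁻¹`, and let
`λ₁ ≥ … ≥ λₙ > 0` be the symplectic eigenvalues of `M` (i.e. `Sᵀ M S = [[Λ,0],[0,Λ]]` for some
symplectic `S`). If `λⱼ < 1` for all `j`, then all Robertson–Schrödinger inequalities for `Σ` are
strict. -/
theorem stmt10 {n : ℕ} (ℏ : ℝ) (hℏ : 0 < ℏ)
    (Cov : Matrix (Fin n ⊕ Fin n) (Fin n ⊕ Fin n) ℝ)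
    (hCovSymm : Cov.IsSymm) (hCovPos : Cov.PosDef)
    (lam : Fin n → ℝ) (hlampos : ∀ j, 0 < lam j) (hord : Antitone lam)
    (S : Matrix (Fin n ⊕ Fin n) (Fin n ⊕ Fin n) ℝ) (hS : IsSymplectic S)
    (hdiag : Sᵀ * ((ℏ / 2) • Cov⁻¹) * S
        = Matrix.fromBlocks (Matrix.diagonal lam) 0 0 (Matrix.diagonal lam))
    (hlt : ∀ j, lam j < 1) :
    ∀ j : Fin n,
      Cov (Sum.inl j) (Sum.inl j) * Cov (Sum.inr j) (Sum.inr j)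
        > Cov (Sum.inl j) (Sum.inr j) ^ 2 + ℏ ^ 2 / 4 := by
  intro j
  have hℏ2 : (0:ℝ) < ℏ / 2 := by linarith
  have hJJ := stdJ_mul_stdJ n
  set J := stdJ n with hJdef
  set S' : Matrix (Fin n ⊕ Fin n) (Fin n ⊕ Fin n) ℝ := (-J) * Sᵀ * J with hS'def
  have hS'S : S' * S = 1 := by
    have h1 : Sᵀ * J * S = J := hS
    calc S' * S = -(J * (Sᵀ * J * S)) := by
          simp only [hS'def, Matrix.neg_mul, Matrix.mul_assoc]
      _ = -(J * J) := by rw [h1]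
      _ = 1 := by rw [hJJ]; simp
  have hSS' : S * S' = 1 := mul_eq_one_comm.mp hS'S
  have hSJS : S * J * Sᵀ = J := by
    have h3 : S * J * Sᵀ * J = -1 := by
      have h4 : -(S * J * Sᵀ * J) = 1 := by
        calc -(S * J * Sᵀ * J) = S * (-J * Sᵀ * J) := by
              simp only [Matrix.neg_mul, Matrix.mul_neg, Matrix.mul_assoc]
        _ = 1 := hSS'
      calc S * J * Sᵀ * J = - -(S * J * Sᵀ * J) := by rw [neg_neg]
        _ = -1 := by rw [h4]
    have hJnJ : J * -J = (1 : Matrix (Fin n ⊕ Fin n) (Fin n ⊕ Fin n) ℝ) := by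
      rw [Matrix.mul_neg, hJJ]; simp
    calc S * J * Sᵀ = S * J * Sᵀ * (J * -J) := by rw [hJnJ, Matrix.mul_one]
      _ = (S * J * Sᵀ * J) * (-J) := by simp only [Matrix.mul_assoc]
      _ = (-1 : Matrix _ _ ℝ) * (-J) := by rw [h3]
      _ = J := by simp
  -- Cov = S * G * Sᵀ
  set mu : Fin n → ℝ := fun i => (ℏ / 2) * (lam i)⁻¹ with hmudef
  set G : Matrix (Fin n ⊕ Fin n) (Fin n ⊕ Fin n) ℝ :=
    Matrix.fromBlocks (Matrix.diagonal mu) 0 0 (Matrix.diagonal mu) with hGdef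
  set D : Matrix (Fin n ⊕ Fin n) (Fin n ⊕ Fin n) ℝ :=
    Matrix.fromBlocks (Matrix.diagonal lam) 0 0 (Matrix.diagonal lam) with hDdef
  have hDG : D * G = (ℏ / 2) • 1 := by
    have hd : Matrix.diagonal lam * Matrix.diagonal mu
        = (ℏ/2) • (1 : Matrix (Fin n) (Fin n) ℝ) := by
      have hfun : (fun i => lam i * mu i) = fun _ : Fin n => ℏ / 2 := by
        funext i
        have h0 := (hlampos i).ne'
        simp only [hmudef]
        field_simp
      rw [Matrix.diagonal_mul_diagonal, Matrix.smul_one_eq_diagonal, hfun]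
    rw [hDdef, hGdef, Matrix.fromBlocks_multiply]
    rw [← Matrix.fromBlocks_one, Matrix.fromBlocks_smul]
    simp [hd]
  have hCovInv : Cov * Cov⁻¹ = 1 :=
    Matrix.mul_nonsing_inv _ ((Matrix.isUnit_iff_isUnit_det _).mp hCovPos.isUnit)
  have hTS : S'ᵀ * Sᵀ = 1 := by rw [← Matrix.transpose_mul, hSS', Matrix.transpose_one]
  have hM : (ℏ/2) • Cov⁻¹ = S'ᵀ * D * S' := by
    rw [← hdiag]
    rw [show S'ᵀ * (Sᵀ * ((ℏ/2) • Cov⁻¹) * S) * S'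
        = (S'ᵀ * Sᵀ) * ((ℏ/2) • Cov⁻¹) * (S * S') by simp only [Matrix.mul_assoc],
      hTS, hSS', Matrix.one_mul, Matrix.mul_one]
  have hkey : Cov⁻¹ * (S * G * Sᵀ) = 1 := by
    have h1 : ((ℏ/2) • Cov⁻¹) * (S * G * Sᵀ) = (ℏ/2) • (1 : Matrix _ _ ℝ) := by
      rw [hM]
      calc S'ᵀ * D * S' * (S * G * Sᵀ)
          = S'ᵀ * D * (S' * S) * G * Sᵀ := by simp only [Matrix.mul_assoc]
        _ = S'ᵀ * D * G * Sᵀ := by rw [hS'S, Matrix.mul_one]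
        _ = S'ᵀ * (D * G) * Sᵀ := by simp only [Matrix.mul_assoc]
        _ = S'ᵀ * ((ℏ/2) • (1 : Matrix _ _ ℝ)) * Sᵀ := by rw [hDG]
        _ = (ℏ/2) • (S'ᵀ * Sᵀ) := by
            rw [Matrix.mul_smul, Matrix.smul_mul, Matrix.mul_one]
        _ = (ℏ/2) • (1 : Matrix _ _ ℝ) := by rw [hTS]
    have h2 : (ℏ/2) • (Cov⁻¹ * (S * G * Sᵀ)) = (ℏ/2) • (1 : Matrix _ _ ℝ) := by
      rw [← Matrix.smul_mul]; exact h1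
    exact smul_right_injective _ (ne_of_gt hℏ2) h2
  have hCovEq : Cov = S * G * Sᵀ := by
    calc Cov = Cov * (Cov⁻¹ * (S * G * Sᵀ)) := by rw [hkey, Matrix.mul_one]
      _ = (Cov * Cov⁻¹) * (S * G * Sᵀ) := by simp only [← Matrix.mul_assoc]
      _ = S * G * Sᵀ := by rw [hCovInv, Matrix.one_mul]
  -- the smallest symplectic eigenvalue of Cov
  set j0 : Fin n := ⟨0, j.pos⟩ with hj0def
  set mu0 : ℝ := mu j0 with hmu0def
  have hmu0 : ℏ/2 < mu0 := by
    have h1 : lam j0 < 1 := hlt j0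
    have h2 : 0 < lam j0 := hlampos j0
    have h3 : 0 < (lam j0)⁻¹ := inv_pos.mpr h2
    have h4 : lam j0 * (lam j0)⁻¹ = 1 := mul_inv_cancel₀ h2.ne'
    rw [hmu0def, hmudef]
    nlinarith
  have hmu0pos : 0 < mu0 := lt_trans hℏ2 hmu0
  have hmu0le : ∀ k, mu0 ≤ mu k := by
    intro k
    have hk : lam k ≤ lam j0 := hord (by simp [hj0def, Fin.le_def])
    have h2 := hlampos k
    have h3 := hlampos j0
    have h5 : (lam j0)⁻¹ ≤ (lam k)⁻¹ := by
      rw [inv_le_inv₀ h3 h2]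
      exact hk
    rw [hmu0def, hmudef]
    exact mul_le_mul_of_nonneg_left h5 hℏ2.le
  -- the key quadratic inequality
  have key : ∀ u w : (Fin n ⊕ Fin n) → ℝ,
      2 * mu0 * (u ⬝ᵥ (J *ᵥ w)) ≤ u ⬝ᵥ (Cov *ᵥ u) + w ⬝ᵥ (Cov *ᵥ w) := by
    intro u w
    have hform : ∀ v : (Fin n ⊕ Fin n) → ℝ,
        v ⬝ᵥ (Cov *ᵥ v) = (Sᵀ *ᵥ v) ⬝ᵥ (G *ᵥ (Sᵀ *ᵥ v)) := by
      intro v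
      rw [hCovEq, ← Matrix.mulVec_mulVec, ← Matrix.mulVec_mulVec,
        Matrix.dotProduct_mulVec v S, ← Matrix.mulVec_transpose]
    have hj : u ⬝ᵥ (J *ᵥ w) = (Sᵀ *ᵥ u) ⬝ᵥ (J *ᵥ (Sᵀ *ᵥ w)) := by
      conv_lhs => rw [← hSJS]
      rw [← Matrix.mulVec_mulVec, ← Matrix.mulVec_mulVec,
        Matrix.dotProduct_mulVec u S, ← Matrix.mulVec_transpose]
    set a := Sᵀ *ᵥ u with hadef
    set b := Sᵀ *ᵥ w with hbdef
    rw [hform u, hform w, hj, hGdef, quad_blockDiag, quad_blockDiag, hJdef, quad_stdJ]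
    rw [Finset.mul_sum, ← Finset.sum_add_distrib]
    apply Finset.sum_le_sum
    intro i _
    have h1 : mu0 ≤ mu i := hmu0le i
    nlinarith [mul_nonneg hmu0pos.le
        (add_nonneg (sq_nonneg (a (Sum.inl i) - b (Sum.inr i)))
          (sq_nonneg (a (Sum.inr i) + b (Sum.inl i)))),
      mul_nonneg (sub_nonneg.mpr h1)
        (by positivity : (0:ℝ) ≤ a (Sum.inl i)^2 + a (Sum.inr i)^2
            + b (Sum.inl i)^2 + b (Sum.inr i)^2)]
  -- diagonal entries are positive
  have hP : 0 < Cov (Sum.inl j) (Sum.inl j) := by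
    have h := hCovPos.dotProduct_mulVec_pos (x := Pi.single (Sum.inl j) 1) (by
      intro h0
      have := congrFun h0 (Sum.inl j)
      simp at this)
    simpa [Matrix.mulVec_single, dotProduct_single, Matrix.col_apply] using h
  -- specialize
  set P := Cov (Sum.inl j) (Sum.inl j) with hPdef
  set B := Cov (Sum.inr j) (Sum.inr j) with hBdef
  set c := Cov (Sum.inl j) (Sum.inr j) with hcdef
  have hsym : Cov (Sum.inr j) (Sum.inl j) = c := hCovSymm.apply (Sum.inl j) (Sum.inr j)
  set u : (Fin n ⊕ Fin n) → ℝ := Pi.single (Sum.inl j) (-c) + Pi.single (Sum.inr j) P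
    with hudef
  set w : (Fin n ⊕ Fin n) → ℝ := Pi.single (Sum.inl j) (-mu0) with hwdef
  have h1 : u ⬝ᵥ (Cov *ᵥ u) = B * P^2 - P * c^2 := by
    rw [hudef]
    simp only [Matrix.mulVec_add, Matrix.mulVec_single, dotProduct_add, add_dotProduct,
      single_dotProduct, Pi.add_apply, Pi.smul_apply, op_smul_eq_mul, Matrix.col_apply]
    rw [hsym, ← hPdef, ← hBdef, ← hcdef]
    ring
  have h2 : w ⬝ᵥ (Cov *ᵥ w) = P * mu0^2 := by
    rw [hwdef]
    simp only [Matrix.mulVec_single, single_dotProduct, Pi.smul_apply, op_smul_eq_mul,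
      Matrix.col_apply]
    rw [← hPdef]
    ring
  have h3 : u ⬝ᵥ (J *ᵥ w) = P * mu0 := by
    rw [hJdef, quad_stdJ, hudef, hwdef]
    rw [Finset.sum_eq_single j]
    · simp [Pi.single_apply]
    · intro k _ hk
      simp [Pi.single_apply, hk, Ne.symm hk]
    · simp
  have hk := key u w
  rw [h1, h2, h3] at hk
  have hBP : c^2 + mu0^2 ≤ P * B := by nlinarith [hk, hP]
  nlinarith [hBP, hmu0, hℏ2]
end
end

section
/- Let ℏ > 0 and let Σ be a real symmetric positive definite 2n×2n matrix such that the complex Hermitian matrix Σ + (iℏ/2)J is positive semidefinite, and suppose one Robertson–Schrödinger inequality is saturated: Σ_{1,1}·Σ_{n+1,n+1} = (Σ_{1,n+1})² + ℏ²/4. Then the largest symplectic eigenvalue of M = (ℏ/2)Σ^{-1} equals 1; equivalently, the symplectic capacity of the covariance ellipsoid Ω = {z : zᵀMz ≤ ℏ} equals (1/2)h = πℏ. -/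
open Matrix MeasureTheory
open scoped ComplexOrder

noncomputable section

section Aux

variable {m k : Type*} [Fintype m] [Fintype k] [DecidableEq m] [DecidableEq k]

lemma mapC_mul (A B : Matrix m m ℝ) :
    (A * B).map Complex.ofReal = A.map Complex.ofReal * B.map Complex.ofReal :=
  Matrix.map_mul (f := Complex.ofRealHom)

lemma mapC_smul (c : ℝ) (A : Matrix m k ℝ) :
    (c • A).map Complex.ofReal = (c : ℂ) • A.map Complex.ofReal := by
  ext i j
  simp [Matrix.map_apply]

end Aux

set_option maxHeartbeats 1000000 in
/-- If `Σ` is symmetric positive definite, satisfies the quantum condition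
`Σ + (iℏ/2)J ≥ 0`, and saturates the first Robertson–Schrödinger inequality, then the largest
symplectic eigenvalue `λ₁` of `M = (ℏ/2)Σ⁻¹` equals `1` (equivalently, the symplectic capacity
`πℏ/λ₁` of the covariance ellipsoid `Ω = {z : zᵀMz ≤ ℏ}` equals `(1/2)h = πℏ`). -/
theorem stmt11 {n : ℕ} (hn : 0 < n) (ℏ : ℝ) (hℏ : 0 < ℏ)
    (Cov : Matrix (Fin n ⊕ Fin n) (Fin n ⊕ Fin n) ℝ)
    (hCovSymm : Cov.IsSymm) (hCovPos : Cov.PosDef)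
    (hquant : (Cov.map Complex.ofReal
        + (Complex.I * ((ℏ : ℂ) / 2)) • (stdJ n).map Complex.ofReal).PosSemidef)
    (hsat : Cov (Sum.inl ⟨0, hn⟩) (Sum.inl ⟨0, hn⟩) * Cov (Sum.inr ⟨0, hn⟩) (Sum.inr ⟨0, hn⟩)
        = Cov (Sum.inl ⟨0, hn⟩) (Sum.inr ⟨0, hn⟩) ^ 2 + ℏ ^ 2 / 4)
    (lam : Fin n → ℝ) (hlampos : ∀ j, 0 < lam j) (hord : Antitone lam)
    (S : Matrix (Fin n ⊕ Fin n) (Fin n ⊕ Fin n) ℝ) (hS : IsSymplectic S)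
    (hdiag : Sᵀ * ((ℏ / 2) • Cov⁻¹) * S
        = Matrix.fromBlocks (Matrix.diagonal lam) 0 0 (Matrix.diagonal lam)) :
    lam ⟨0, hn⟩ = 1 := by
  classical
  have hlamne : ∀ j, lam j ≠ 0 := fun j => (hlampos j).ne'
  set i0 : Fin n := ⟨0, hn⟩ with hi0
  set z0 : Fin n ⊕ Fin n := Sum.inl i0 with hz0
  set z1 : Fin n ⊕ Fin n := Sum.inr i0 with hz1
  -- J basics
  have hJJ : stdJ n * stdJ n = -1 := by
    unfold stdJ
    rw [Matrix.fromBlocks_multiply]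
    simp [← Matrix.fromBlocks_one, Matrix.fromBlocks_neg]
  have hJinv : (stdJ n)⁻¹ = -stdJ n :=
    Matrix.inv_eq_right_inv (by rw [Matrix.mul_neg, hJJ, neg_neg])
  have hdetJ : (stdJ n).det ≠ 0 := by
    intro h
    have h2 := congrArg Matrix.det hJJ
    rw [Matrix.det_mul, h, mul_zero] at h2
    have h1 : ((-1 : Matrix (Fin n ⊕ Fin n) (Fin n ⊕ Fin n) ℝ)).det
        = (-1 : ℝ) ^ (Fintype.card (Fin n ⊕ Fin n)) := by
      rw [show (-1 : Matrix (Fin n ⊕ Fin n) (Fin n ⊕ Fin n) ℝ)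
            = (-1 : ℝ) • (1 : Matrix (Fin n ⊕ Fin n) (Fin n ⊕ Fin n) ℝ) by simp,
        Matrix.det_smul, Matrix.det_one, mul_one]
    rw [h1] at h2
    exact pow_ne_zero _ (by norm_num : (-1 : ℝ) ≠ 0) h2.symm
  -- determinant of S
  have hSdet : IsUnit S.det := by
    have h := congrArg Matrix.det hS
    rw [Matrix.det_mul, Matrix.det_mul, Matrix.det_transpose] at h
    refine isUnit_iff_ne_zero.mpr fun h0 => ?_
    rw [h0, zero_mul, zero_mul] at h
    exact hdetJ h.symm
  have hST : IsUnit Sᵀ.det := by rwa [Matrix.det_transpose]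
  -- S J Sᵀ = J
  have h2 : S⁻¹ * stdJ n * Sᵀ⁻¹ = stdJ n := by
    have h := congrArg (fun M : Matrix (Fin n ⊕ Fin n) (Fin n ⊕ Fin n) ℝ => M⁻¹) hS
    rw [Matrix.mul_inv_rev, Matrix.mul_inv_rev, hJinv, Matrix.neg_mul, Matrix.mul_neg,
      neg_inj, ← Matrix.mul_assoc] at h
    exact h
  have hSJS : S * stdJ n * Sᵀ = stdJ n := by
    conv_lhs => rw [← h2]
    simp only [Matrix.mul_assoc]
    rw [Matrix.nonsing_inv_mul _ hST, Matrix.mul_one, Matrix.mul_nonsing_inv_cancel_left _ _ hSdet]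
  -- the diagonal matrices
  set D : Matrix (Fin n ⊕ Fin n) (Fin n ⊕ Fin n) ℝ :=
    Matrix.fromBlocks (Matrix.diagonal lam) 0 0 (Matrix.diagonal lam) with hD
  set Di : Matrix (Fin n ⊕ Fin n) (Fin n ⊕ Fin n) ℝ :=
    Matrix.fromBlocks (Matrix.diagonal fun j => (lam j)⁻¹) 0 0
      (Matrix.diagonal fun j => (lam j)⁻¹) with hDi
  have hdlam : Matrix.diagonal lam * Matrix.diagonal (fun j => (lam j)⁻¹) = 1 := by
    rw [Matrix.diagonal_mul_diagonal,
      show (fun i => lam i * (lam i)⁻¹) = (fun _ => (1 : ℝ)) from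
        funext fun j => mul_inv_cancel₀ (hlamne j), Matrix.diagonal_one]
  have hdlam' : Matrix.diagonal (fun j => (lam j)⁻¹) * Matrix.diagonal lam = 1 := by
    rw [Matrix.diagonal_mul_diagonal,
      show (fun i => (lam i)⁻¹ * lam i) = (fun _ => (1 : ℝ)) from
        funext fun j => inv_mul_cancel₀ (hlamne j), Matrix.diagonal_one]
  have hDiD : Di * D = 1 := by
    rw [hDi, hD, Matrix.fromBlocks_multiply]
    simp [hdlam', ← Matrix.fromBlocks_one]
  -- Cov
  have hCdet : IsUnit Cov.det := isUnit_iff_ne_zero.mpr hCovPos.det_pos.ne'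
  have hsmul : Sᵀ * Cov⁻¹ * S = (2 / ℏ) • D := by
    rw [← hdiag, Matrix.mul_smul, Matrix.smul_mul, smul_smul,
      show (2 / ℏ) * (ℏ / 2) = 1 by field_simp, one_smul]
  have hTCi : Sᵀ * Cov⁻¹ = (2 / ℏ) • (D * S⁻¹) := by
    have h := congrArg (· * S⁻¹) hsmul
    simp only [Matrix.mul_nonsing_inv_cancel_right _ _ hSdet, Matrix.smul_mul] at h
    exact h
  have hPC : S * Di * Sᵀ * Cov⁻¹ = (2 / ℏ) • 1 := by
    calc S * Di * Sᵀ * Cov⁻¹ = S * Di * (Sᵀ * Cov⁻¹) := by rw [Matrix.mul_assoc]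
      _ = (2 / ℏ) • (S * Di * (D * S⁻¹)) := by rw [hTCi, Matrix.mul_smul]
      _ = (2 / ℏ) • (S * (Di * D) * S⁻¹) := by simp only [Matrix.mul_assoc]
      _ = (2 / ℏ) • 1 := by rw [hDiD, Matrix.mul_one, Matrix.mul_nonsing_inv _ hSdet]
  have hCov : Cov = (ℏ / 2) • (S * Di * Sᵀ) := by
    have h := congrArg (· * Cov) hPC
    simp only [Matrix.nonsing_inv_mul_cancel_right _ _ hCdet, Matrix.smul_mul,
      Matrix.one_mul] at h
    rw [h, smul_smul, show (ℏ / 2) * (2 / ℏ) = 1 by field_simp, one_smul]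
  -- Complexification
  set Sc := S.map Complex.ofReal with hSc
  set Dic := Di.map Complex.ofReal with hDicdef
  set Jc := (stdJ n).map Complex.ofReal with hJcdef
  set N : Matrix (Fin n ⊕ Fin n) (Fin n ⊕ Fin n) ℂ := Dic + Complex.I • Jc with hN
  set Mc := Cov.map Complex.ofReal + (Complex.I * ((ℏ : ℂ) / 2)) • Jc with hMc
  have hCovC : Cov.map Complex.ofReal = ((ℏ : ℂ) / 2) • (Sc * Dic * Scᵀ) := by
    rw [hCov, mapC_smul, mapC_mul, mapC_mul, Matrix.transpose_map]
    push_cast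
    rfl
  have hJcS : Sc * Jc * Scᵀ = Jc := by
    rw [hSc, hJcdef, ← Matrix.transpose_map, ← mapC_mul, ← mapC_mul, hSJS]
  have hMcEq : Mc = ((ℏ : ℂ) / 2) • (Sc * N * Scᵀ) := by
    rw [hMc, hN, Matrix.mul_add, Matrix.add_mul, Matrix.mul_smul, Matrix.smul_mul, smul_add,
      smul_smul, hCovC, hJcS, mul_comm]
  -- saturation vector
  set a : ℝ := Cov z0 z0 with ha
  set c : ℝ := Cov z0 z1 with hc
  set d : ℝ := Cov z1 z1 with hd
  have hc' : Cov z1 z0 = c := hCovSymm.apply z0 z1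
  set b : ℂ := (c : ℂ) + Complex.I * ((ℏ : ℂ) / 2) with hb
  set b' : ℂ := (c : ℂ) - Complex.I * ((ℏ : ℂ) / 2) with hb'
  have hz01 : z0 ≠ z1 := by simp [hz0, hz1]
  -- entries of J and Mc
  have hJ00 : stdJ n z0 z0 = 0 := by simp [stdJ, hz0]
  have hJ01 : stdJ n z0 z1 = 1 := by simp [stdJ, hz0, hz1, Matrix.one_apply_eq]
  have hJ10 : stdJ n z1 z0 = -1 := by simp [stdJ, hz0, hz1, Matrix.one_apply_eq]
  have hJ11 : stdJ n z1 z1 = 0 := by simp [stdJ, hz1]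
  have hMc00 : Mc z0 z0 = (a : ℂ) := by
    simp [hMc, hJcdef, Matrix.map_apply, hJ00, ha]
  have hMc01 : Mc z0 z1 = b := by
    simp [hMc, hJcdef, Matrix.map_apply, hJ01, hb, hc]
    try ring
  have hMc10 : Mc z1 z0 = b' := by
    simp [hMc, hJcdef, Matrix.map_apply, hJ10, hb', hc', hc]
    try ring
  have hMc11 : Mc z1 z1 = (d : ℂ) := by
    simp [hMc, hJcdef, Matrix.map_apply, hJ11, hd]
  set v : (Fin n ⊕ Fin n) → ℂ := Pi.single z0 b + Pi.single z1 (-(a : ℂ)) with hv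
  have hbne : b ≠ 0 := by
    intro h
    have h2 := congrArg Complex.im h
    simp [hb] at h2
    linarith
  have hvne : v ≠ 0 := by
    intro h
    have h2 := congrFun h z0
    rw [hv] at h2
    simp [Pi.single_apply, hz01, hz01.symm] at h2
    exact hbne h2
  have hstarv : star v = Pi.single z0 b' + Pi.single z1 (-(a : ℂ)) := by
    funext k
    simp only [Pi.star_apply, hv, Pi.add_apply, Pi.single_apply]
    split_ifs with h1 h2
    · exact absurd (h1.symm.trans h2) hz01
    · simp [hb, hb', Complex.conj_ofReal]
      ring
    · simp [Complex.conj_ofReal]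
    · simp
  have hq : star v ⬝ᵥ (Mc *ᵥ v) = 0 := by
    rw [hstarv, hv, Matrix.mulVec_add, Matrix.mulVec_single, Matrix.mulVec_single]
    simp only [add_dotProduct, single_dotProduct, Pi.add_apply, Pi.smul_apply, Matrix.col_apply,
      op_smul_eq_mul]
    rw [hMc00, hMc01, hMc10, hMc11, hb, hb']
    have hsC : (a : ℂ) * (d : ℂ) = (c : ℂ) ^ 2 + (ℏ : ℂ) ^ 2 / 4 := by
      exact_mod_cast congrArg (Complex.ofReal) hsat
    linear_combination (a : ℂ) * hsC + ((a : ℂ) * (ℏ : ℂ) ^ 2 / 4) * Complex.I_sq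
  have hvMc : Mc *ᵥ v = 0 := (hquant.dotProduct_mulVec_zero_iff v).mp hq
  have hdetMc : Mc.det = 0 := by
    rw [← Matrix.exists_mulVec_eq_zero_iff]
    exact ⟨v, hvne, hvMc⟩
  -- determinant of N
  have hScdet : Sc.det = (S.det : ℂ) := (RingHom.map_det Complex.ofRealHom S).symm
  have hScne : Sc.det ≠ 0 := by
    rw [hScdet]
    exact_mod_cast hSdet.ne_zero
  have h2ne : ((ℏ : ℂ) / 2) ≠ 0 := div_ne_zero (Complex.ofReal_ne_zero.mpr hℏ.ne') two_ne_zero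
  have hdetN : N.det = 0 := by
    by_contra hNne
    have h := hdetMc
    rw [hMcEq, Matrix.det_smul, Matrix.det_mul, Matrix.det_mul, Matrix.det_transpose] at h
    exact mul_ne_zero (pow_ne_zero _ h2ne)
      (mul_ne_zero (mul_ne_zero hScne hNne) hScne) h
  -- kernel vector of N
  obtain ⟨u, hu0, huN⟩ := Matrix.exists_mulVec_eq_zero_iff.mpr hdetN
  have hu' : u = Sum.elim (u ∘ Sum.inl) (u ∘ Sum.inr) := (Sum.elim_comp_inl_inr u).symm
  have hDicB : Dic = Matrix.fromBlocks (Matrix.diagonal fun j => ((lam j : ℂ))⁻¹) 0 0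
      (Matrix.diagonal fun j => ((lam j : ℂ))⁻¹) := by
    rw [hDicdef, hDi, Matrix.fromBlocks_map]
    simp only [Matrix.diagonal_map Complex.ofReal_zero, Matrix.map_zero _ Complex.ofReal_zero]
    simp [Complex.ofReal_inv]
  have hJcB : Jc = Matrix.fromBlocks 0 1 (-1) 0 := by
    rw [hJcdef]
    unfold stdJ
    rw [Matrix.fromBlocks_map]
    ext i j
    cases i <;> cases j <;>
      simp [Matrix.map_apply, Matrix.neg_apply, Matrix.one_apply, apply_ite]
  have hDu : ∀ kk, (Dic *ᵥ u) kk = Sum.elim (fun j => ((lam j : ℂ))⁻¹ * u (Sum.inl j))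
      (fun j => ((lam j : ℂ))⁻¹ * u (Sum.inr j)) kk := by
    intro kk
    conv_lhs => rw [hDicB, hu', Matrix.fromBlocks_mulVec]
    cases kk with
    | inl j => simp [Matrix.mulVec_diagonal]
    | inr j => simp [Matrix.mulVec_diagonal]
  have hJu : ∀ kk, (Jc *ᵥ u) kk = Sum.elim (fun j => u (Sum.inr j))
      (fun j => -u (Sum.inl j)) kk := by
    intro kk
    conv_lhs => rw [hJcB, hu', Matrix.fromBlocks_mulVec]
    cases kk with
    | inl j => simp
    | inr j => simp [Matrix.neg_mulVec]
  have hNu : ∀ kk, (Dic *ᵥ u) kk + Complex.I * ((Jc *ᵥ u) kk) = 0 := by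
    intro kk
    have h := congrFun huN kk
    simpa [hN, Matrix.add_mulVec, Matrix.smul_mulVec] using h
  have hE1 : ∀ j, ((lam j : ℂ))⁻¹ * u (Sum.inl j) + Complex.I * u (Sum.inr j) = 0 := by
    intro j
    have h := hNu (Sum.inl j)
    rwa [hDu, hJu] at h
  have hE2 : ∀ j, ((lam j : ℂ))⁻¹ * u (Sum.inr j) + Complex.I * (-u (Sum.inl j)) = 0 := by
    intro j
    have h := hNu (Sum.inr j)
    rwa [hDu, hJu] at h
  have hux : ∀ j, (((lam j : ℂ))⁻¹ ^ 2 - 1) * u (Sum.inl j) = 0 := by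
    intro j
    linear_combination ((lam j : ℂ))⁻¹ * hE1 j - Complex.I * hE2 j
      - u (Sum.inl j) * Complex.I_sq
  have hexists : ∃ j, lam j = 1 := by
    by_contra hno
    push_neg at hno
    have hmune : ∀ j, (((lam j : ℂ))⁻¹ ^ 2 - 1) ≠ 0 := by
      intro j h
      have hr : ((lam j)⁻¹ : ℝ) ^ 2 = 1 := by
        have : ((lam j : ℂ))⁻¹ ^ 2 = 1 := by linear_combination h
        exact_mod_cast this
      have hfac : ((lam j)⁻¹ - 1) * ((lam j)⁻¹ + 1) = 0 := by linear_combination hr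
      rcases mul_eq_zero.mp hfac with h1 | h1
      · have : (lam j)⁻¹ = 1 := by linarith
        exact hno j (inv_eq_one.mp this)
      · have : (lam j)⁻¹ = -1 := by linarith
        have := hlampos j
        have h2 : (0 : ℝ) < (lam j)⁻¹ := inv_pos.mpr this
        linarith
    have hux0 : ∀ j, u (Sum.inl j) = 0 := by
      intro j
      rcases mul_eq_zero.mp (hux j) with h | h
      · exact absurd h (hmune j)
      · exact h
    have hup0 : ∀ j, u (Sum.inr j) = 0 := by
      intro j
      have h := hE1 j
      rw [hux0 j, mul_zero, zero_add] at h
      exact (mul_eq_zero.mp h).resolve_left Complex.I_ne_zero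
    apply hu0
    funext kk
    cases kk with
    | inl j => exact hux0 j
    | inr j => exact hup0 j
  obtain ⟨j1, hj1⟩ := hexists
  -- upper bound : lam i0 ≤ 1
  have hScH : Scᴴ = Scᵀ := by
    ext i j
    simp [hSc, Matrix.conjTranspose_apply, Matrix.map_apply, Complex.conj_ofReal]
  have hScdetu : IsUnit Sc.det := isUnit_iff_ne_zero.mpr hScne
  have hScTdetu : IsUnit Scᵀ.det := by rwa [Matrix.det_transpose]
  have hNps : (((ℏ : ℂ) / 2) • N).PosSemidef := by
    have h := hquant.mul_mul_conjTranspose_same Sc⁻¹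
    have hH : (Sc⁻¹)ᴴ = (Scᵀ)⁻¹ := by rw [Matrix.conjTranspose_nonsing_inv, hScH]
    rw [hH, hMcEq] at h
    convert h using 1
    rw [Matrix.mul_smul, Matrix.smul_mul]
    congr 1
    rw [eq_comm]
    simp only [← Matrix.mul_assoc]
    rw [Matrix.nonsing_inv_mul _ hScdetu, Matrix.one_mul,
      Matrix.mul_nonsing_inv_cancel_right _ _ hScTdetu]
  have hN00 : N z0 z0 = ((lam i0 : ℂ))⁻¹ := by
    rw [hN, hDicB, hJcB]
    simp [hz0]
  have hN01 : N z0 z1 = Complex.I := by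
    rw [hN, hDicB, hJcB]
    simp [hz0, hz1, Matrix.one_apply_eq]
  have hN10 : N z1 z0 = -Complex.I := by
    rw [hN, hDicB, hJcB]
    simp [hz0, hz1, Matrix.one_apply_eq]
  have hN11 : N z1 z1 = ((lam i0 : ℂ))⁻¹ := by
    rw [hN, hDicB, hJcB]
    simp [hz1]
  set w : (Fin n ⊕ Fin n) → ℂ := Pi.single z0 1 + Pi.single z1 Complex.I with hw
  have hstarw : star w = Pi.single z0 1 + Pi.single z1 (-Complex.I) := by
    funext k
    simp only [Pi.star_apply, hw, Pi.add_apply, Pi.single_apply]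
    split_ifs with h1 h2
    · exact absurd (h1.symm.trans h2) hz01
    · simp
    · simp [Complex.conj_I]
    · simp
  have hformval : star w ⬝ᵥ ((((ℏ : ℂ) / 2) • N) *ᵥ w)
      = ((ℏ * ((lam i0)⁻¹ - 1) : ℝ) : ℂ) := by
    rw [hstarw, Matrix.smul_mulVec, hw, Matrix.mulVec_add, Matrix.mulVec_single,
      Matrix.mulVec_single]
    simp only [add_dotProduct, single_dotProduct, Pi.smul_apply, Pi.add_apply,
      smul_eq_mul, Matrix.col_apply, op_smul_eq_mul]
    rw [hN00, hN01, hN10, hN11]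
    push_cast
    linear_combination ((ℏ : ℂ) / 2) * (2 - ((lam i0 : ℂ))⁻¹) * Complex.I_sq
  have hle : lam i0 ≤ 1 := by
    have h0 := hNps.dotProduct_mulVec_nonneg w
    rw [hformval] at h0
    have h1 : (0 : ℝ) ≤ ℏ * ((lam i0)⁻¹ - 1) := Complex.zero_le_real.mp h0
    have h2 : (1 : ℝ) ≤ (lam i0)⁻¹ := by nlinarith
    have h3 := hlampos i0
    have h4 : lam i0 * (lam i0)⁻¹ = 1 := mul_inv_cancel₀ (hlamne i0)
    nlinarith
  have hge : (1 : ℝ) ≤ lam i0 := by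
    have hij : i0 ≤ j1 := by simp [Fin.le_def, hi0]
    have := hord hij
    rwa [hj1] at this
  linarith
end
end

section
/- Let ℏ > 0, let M be a real symmetric positive definite 2n×2n matrix with symplectic eigenvalues λ_1 ≥ … ≥ λ_n (so S₀ᵀMS₀ = diag(λ_1,…,λ_n,λ_1,…,λ_n) for some symplectic S₀), and let Ω = {z ∈ ℝ^{2n} : zᵀMz ≤ ℏ}. If λ_1 ≤ 1, then Ω contains a quantum blob: there exists a real symplectic matrix S such that S(B_{√ℏ}) ⊆ Ω, where B_{√ℏ} is the closed Euclidean ball of radius √ℏ centered at the origin. -/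
open Matrix MeasureTheory
open scoped ComplexOrder

noncomputable section

/-- Let `M` be symmetric positive definite with symplectic eigenvalues
`λ₁ ≥ … ≥ λₙ`, and `Ω = {z : zᵀMz ≤ ℏ}`. If `λ₁ ≤ 1`, then `Ω` contains a quantum blob, i.e. the
image under some symplectic matrix `S` of the closed Euclidean ball `B_{√ℏ} = {z : z ⬝ᵥ z ≤ ℏ}`. -/
theorem stmt12 {n : ℕ} (hn : 0 < n) (ℏ : ℝ) (hℏ : 0 < ℏ)
    (M : Matrix (Fin n ⊕ Fin n) (Fin n ⊕ Fin n) ℝ)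
    (hMSymm : M.IsSymm) (hMPos : M.PosDef)
    (lam : Fin n → ℝ) (hlampos : ∀ j, 0 < lam j) (hord : Antitone lam)
    (S₀ : Matrix (Fin n ⊕ Fin n) (Fin n ⊕ Fin n) ℝ) (hS₀ : IsSymplectic S₀)
    (hdiag : S₀ᵀ * M * S₀ = Matrix.fromBlocks (Matrix.diagonal lam) 0 0 (Matrix.diagonal lam))
    (hlam1 : lam ⟨0, hn⟩ ≤ 1) :
    ∃ S : Matrix (Fin n ⊕ Fin n) (Fin n ⊕ Fin n) ℝ, IsSymplectic S ∧
      S.mulVec '' {z : Fin n ⊕ Fin n → ℝ | z ⬝ᵥ z ≤ ℏ}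
        ⊆ {z : Fin n ⊕ Fin n → ℝ | z ⬝ᵥ M.mulVec z ≤ ℏ} := by
  refine ⟨S₀, hS₀, ?_⟩
  rintro _ ⟨z, hz, rfl⟩
  simp only [Set.mem_setOf_eq] at hz ⊢
  have key : (S₀.mulVec z) ⬝ᵥ M.mulVec (S₀.mulVec z)
      = z ⬝ᵥ (S₀ᵀ * M * S₀).mulVec z := by
    rw [← Matrix.mulVec_mulVec, ← Matrix.mulVec_mulVec, Matrix.dotProduct_mulVec z,
      Matrix.vecMul_transpose]
  rw [key, hdiag, Matrix.fromBlocks_diagonal]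
  have hle : ∀ i, Sum.elim lam lam i ≤ 1 := by
    rintro (j | j) <;>
      simpa using le_trans (hord (show (⟨0, hn⟩ : Fin n) ≤ j from Fin.mk_le_of_le_val (Nat.zero_le _))) hlam1
  calc z ⬝ᵥ (Matrix.diagonal (Sum.elim lam lam)).mulVec z
      = ∑ i, Sum.elim lam lam i * z i * z i := by
        simp [dotProduct, Matrix.mulVec_diagonal, mul_comm, mul_assoc, mul_left_comm]
    _ ≤ ∑ i, z i * z i := by
        refine Finset.sum_le_sum fun i _ => ?_
        have : Sum.elim lam lam i * (z i * z i) ≤ 1 * (z i * z i) :=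
          mul_le_mul_of_nonneg_right (hle i) (mul_self_nonneg _)
        simpa [mul_assoc] using this
    _ = z ⬝ᵥ z := rfl
    _ ≤ ℏ := hz
end
end

section
/- Let d_1, …, d_n be positive real numbers and let D be the 2n×2n diagonal matrix D = diag(d_1,…,d_n,d_1,…,d_n). If U is a real symplectic 2n×2n matrix satisfying UᵀDU = D, then U commutes with J (UJ = JU) and U is orthogonal (UᵀU = I); that is, U belongs to the group U(n) = Sp(2n,ℝ) ∩ O(2n,ℝ) of symplectic rotations. -/
open Matrix MeasureTheory
open scoped ComplexOrder

noncomputable section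

/-- If `D = diag(d₁,…,dₙ,d₁,…,dₙ)` with all `dⱼ > 0` and `U` is a symplectic
matrix with `Uᵀ D U = D`, then `U` commutes with `J` and is orthogonal; i.e. `U` belongs to
`U(n) = Sp(2n,ℝ) ∩ O(2n,ℝ)`. -/
theorem stmt15 {n : ℕ} (d : Fin n → ℝ) (hd : ∀ j, 0 < d j)
    (U : Matrix (Fin n ⊕ Fin n) (Fin n ⊕ Fin n) ℝ) (hU : IsSymplectic U)
    (hUD : Uᵀ * Matrix.fromBlocks (Matrix.diagonal d) 0 0 (Matrix.diagonal d) * U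
        = Matrix.fromBlocks (Matrix.diagonal d) 0 0 (Matrix.diagonal d)) :
    U * stdJ n = stdJ n * U ∧ Uᵀ * U = 1 := by
  classical
  set J := stdJ n with hJdef
  set b : Fin n ⊕ Fin n → ℝ := Sum.elim d d with hbdef
  have hb : ∀ i, 0 < b i := by rintro (i | i) <;> exact hd _
  set D : Matrix (Fin n ⊕ Fin n) (Fin n ⊕ Fin n) ℝ := Matrix.diagonal b with hDdef
  rw [Matrix.fromBlocks_diagonal] at hUD
  have hU' : Uᵀ * J * U = J := hU
  have hJ2 : J * J = -1 := by
    rw [hJdef]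
    show Matrix.fromBlocks 0 1 (-1) 0 * Matrix.fromBlocks 0 1 (-1) 0 = -1
    rw [Matrix.fromBlocks_multiply, ← Matrix.fromBlocks_one, Matrix.fromBlocks_neg]
    simp
  have hJD : J * D = D * J := by
    ext i j
    rw [hDdef, Matrix.mul_diagonal, Matrix.diagonal_mul]
    rcases i with i | i <;> rcases j with j | j <;>
      simp only [hJdef, hbdef, stdJ, Matrix.fromBlocks_apply₁₁, Matrix.fromBlocks_apply₁₂,
        Matrix.fromBlocks_apply₂₁, Matrix.fromBlocks_apply₂₂, Sum.elim_inl, Sum.elim_inr,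
        Matrix.zero_apply, Matrix.one_apply, Matrix.neg_apply, zero_mul, mul_zero, neg_mul,
        mul_neg, neg_inj]
    all_goals rcases eq_or_ne i j with rfl | h <;> simp [*]
  set E : Matrix (Fin n ⊕ Fin n) (Fin n ⊕ Fin n) ℝ :=
    Matrix.diagonal (fun i => (b i)⁻¹) with hEdef
  have hDinv : E * D = 1 := by
    rw [hEdef, hDdef, Matrix.diagonal_mul_diagonal]
    convert Matrix.diagonal_one with i
    exact inv_mul_cancel₀ (hb i).ne'
  have hDinv' : D * E = 1 := by
    rw [hEdef, hDdef, Matrix.diagonal_mul_diagonal]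
    convert Matrix.diagonal_one with i
    exact mul_inv_cancel₀ (hb i).ne'
  -- two left inverses of U
  have hL1 : ((-J) * Uᵀ * J) * U = 1 := by
    calc ((-J) * Uᵀ * J) * U = (-J) * (Uᵀ * J * U) := by simp only [Matrix.mul_assoc]
    _ = (-J) * J := by rw [hU']
    _ = 1 := by rw [Matrix.neg_mul, hJ2]; simp
  have hL2 : (E * Uᵀ * D) * U = 1 := by
    calc (E * Uᵀ * D) * U = E * (Uᵀ * D * U) := by simp only [Matrix.mul_assoc]
    _ = E * D := by rw [hUD]
    _ = 1 := hDinv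
  have hR1 : U * ((-J) * Uᵀ * J) = 1 := mul_eq_one_comm.mp hL1
  have hinv_eq : (-J) * Uᵀ * J = E * Uᵀ * D := by
    calc (-J) * Uᵀ * J = 1 * ((-J) * Uᵀ * J) := by rw [Matrix.one_mul]
    _ = ((E * Uᵀ * D) * U) * ((-J) * Uᵀ * J) := by rw [hL2]
    _ = (E * Uᵀ * D) * (U * ((-J) * Uᵀ * J)) := by simp only [Matrix.mul_assoc]
    _ = E * Uᵀ * D := by rw [hR1, Matrix.mul_one]
  -- key commutation with D * J
  have h1 : D * ((-J) * Uᵀ * J) = Uᵀ * D := by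
    rw [hinv_eq, ← Matrix.mul_assoc, ← Matrix.mul_assoc, hDinv', Matrix.one_mul]
  have h2 : D * ((-J) * Uᵀ * J) * J = Uᵀ * (D * J) := by
    rw [h1, Matrix.mul_assoc]
  have h3 : D * ((-J) * Uᵀ * J) * J = (D * J) * Uᵀ := by
    have e1 : D * ((-J) * Uᵀ * J) * J = -(D * (J * (Uᵀ * (J * J)))) := by
      simp only [Matrix.neg_mul, Matrix.mul_neg, Matrix.mul_assoc]
    rw [e1, hJ2]
    simp only [Matrix.mul_neg, Matrix.mul_one, neg_neg, Matrix.mul_assoc]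
  have key : Uᵀ * (D * J) = (D * J) * Uᵀ := by rw [← h2, h3]
  -- commutation with D * D
  have hsq : (D * J) * (D * J) = -(D * D) := by
    calc (D * J) * (D * J) = D * ((J * D) * J) := by simp only [Matrix.mul_assoc]
    _ = D * ((D * J) * J) := by rw [hJD]
    _ = D * (D * (J * J)) := by simp only [Matrix.mul_assoc]
    _ = -(D * D) := by rw [hJ2]; simp only [Matrix.mul_neg, Matrix.mul_one, Matrix.mul_assoc]
  have key2 : Uᵀ * (D * D) = (D * D) * Uᵀ := by
    have h4 : Uᵀ * ((D * J) * (D * J)) = ((D * J) * (D * J)) * Uᵀ := by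
      calc Uᵀ * ((D * J) * (D * J)) = (Uᵀ * (D * J)) * (D * J) := by
            simp only [Matrix.mul_assoc]
      _ = ((D * J) * Uᵀ) * (D * J) := by rw [key]
      _ = (D * J) * (Uᵀ * (D * J)) := by simp only [Matrix.mul_assoc]
      _ = (D * J) * ((D * J) * Uᵀ) := by rw [key]
      _ = ((D * J) * (D * J)) * Uᵀ := by simp only [Matrix.mul_assoc]
    rw [hsq] at h4
    simpa [Matrix.mul_neg, Matrix.neg_mul, neg_inj] using h4
  -- commutation with D, entrywise
  have keyD : Uᵀ * D = D * Uᵀ := by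
    rw [hDdef, Matrix.diagonal_mul_diagonal] at key2
    ext i j
    have h5 := congrFun (congrFun key2 i) j
    simp only [Matrix.mul_diagonal, Matrix.diagonal_mul, Matrix.transpose_apply] at h5
    simp only [hDdef, Matrix.mul_diagonal, Matrix.diagonal_mul, Matrix.transpose_apply]
    by_cases h : U j i = 0
    · simp [h]
    · have hbb : b j * b j = b i * b i := by
        have := h5.trans (mul_comm _ _)
        exact mul_left_cancel₀ h this
      have hbi : b j = b i := by nlinarith [hb i, hb j]
      rw [hbi, mul_comm]
  -- commutation with J
  have keyJ : Uᵀ * J = J * Uᵀ := by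
    have h6 : D * (Uᵀ * J) = D * (J * Uᵀ) := by
      calc D * (Uᵀ * J) = (D * Uᵀ) * J := by simp only [Matrix.mul_assoc]
      _ = (Uᵀ * D) * J := by rw [keyD]
      _ = Uᵀ * (D * J) := by simp only [Matrix.mul_assoc]
      _ = (D * J) * Uᵀ := key
      _ = D * (J * Uᵀ) := by simp only [Matrix.mul_assoc]
    calc Uᵀ * J = (E * D) * (Uᵀ * J) := by rw [hDinv, Matrix.one_mul]
    _ = E * (D * (Uᵀ * J)) := by simp only [Matrix.mul_assoc]
    _ = E * (D * (J * Uᵀ)) := by rw [h6]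
    _ = (E * D) * (J * Uᵀ) := by simp only [Matrix.mul_assoc]
    _ = J * Uᵀ := by rw [hDinv, Matrix.one_mul]
  have hJT : Jᵀ = -J := by
    rw [hJdef]
    show (Matrix.fromBlocks 0 1 (-1) 0)ᵀ = -Matrix.fromBlocks 0 1 (-1) 0
    rw [Matrix.fromBlocks_transpose, Matrix.fromBlocks_neg]
    simp
  have first : U * J = J * U := by
    have h7 := congrArg Matrix.transpose keyJ
    rw [Matrix.transpose_mul, Matrix.transpose_mul, Matrix.transpose_transpose, hJT] at h7
    -- h7 : Jᵀ... : (-J) * U = U * (-J)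
    simpa [Matrix.neg_mul, Matrix.mul_neg, neg_inj] using h7.symm
  refine ⟨first, ?_⟩
  have hJinv : J * (-J) = 1 := by rw [Matrix.mul_neg, hJ2]; simp
  have h8 : (Uᵀ * U) * J = J := by
    calc (Uᵀ * U) * J = Uᵀ * (U * J) := by simp only [Matrix.mul_assoc]
    _ = Uᵀ * (J * U) := by rw [first]
    _ = Uᵀ * J * U := by simp only [Matrix.mul_assoc]
    _ = J := hU'
  calc Uᵀ * U = (Uᵀ * U) * (J * (-J)) := by rw [hJinv, Matrix.mul_one]
  _ = ((Uᵀ * U) * J) * (-J) := by simp only [Matrix.mul_assoc]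
  _ = J * (-J) := by rw [h8]
  _ = 1 := hJinv
end
end

section
/- (Wigner transform of a Gaussian.) Let ℏ > 0, let X and Y be real symmetric n×n matrices with X positive definite, and let ψ : ℝⁿ → ℂ be the Gaussian ψ(x) = (πℏ)^{-n/4}(det X)^{1/4} exp(−(1/2ℏ) xᵀ(X+iY)x). Then for all (x,p) ∈ ℝⁿ × ℝⁿ, (1/(2πℏ))ⁿ ∫_{ℝⁿ} exp(−(i/ℏ) p·y) ψ(x + y/2) conj(ψ(x − y/2)) dy = (πℏ)^{-n} exp(−(1/ℏ) zᵀGz), where z = (x,p) and G is the real 2n×2n block matrix G = [[X + YX^{-1}Y, YX^{-1}],[X^{-1}Y, X^{-1}]]. -/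
open Matrix MeasureTheory
open scoped ComplexOrder

noncomputable section

lemma dot_sw {n : ℕ} (M : Matrix (Fin n) (Fin n) ℝ) (a b : Fin n → ℝ) :
    a ⬝ᵥ M.mulVec b = (Mᵀ.mulVec a) ⬝ᵥ b := by
  rw [dotProduct_mulVec, ← vecMul_transpose, transpose_transpose]

lemma sw_dot {n : ℕ} (M : Matrix (Fin n) (Fin n) ℝ) (a b : Fin n → ℝ) :
    (M.mulVec a) ⬝ᵥ b = a ⬝ᵥ (Mᵀ.mulVec b) := by
  rw [dot_sw, transpose_transpose]

lemma psd_det_nonneg {n : ℕ} {B : Matrix (Fin n) (Fin n) ℝ} (hB : B.PosSemidef) :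
    0 ≤ B.det := by
  have h := hB.1.det_eq_prod_eigenvalues
  simp only [RCLike.ofReal_real_eq_id, id] at h
  rw [h]
  exact Finset.prod_nonneg fun i _ => hB.eigenvalues_nonneg i

lemma integral_comp_mulVec {n : ℕ} (f : (Fin n → ℝ) → ℂ) (hf : Continuous f)
    (M : Matrix (Fin n) (Fin n) ℝ) (hM : 0 < M.det) :
    ∫ y : Fin n → ℝ, f y = (M.det : ℂ) * ∫ u : Fin n → ℝ, f (M.mulVec u) := by
  classical
  have hmap : Measure.map (Matrix.toLin' M) volume
      = ENNReal.ofReal (|M.det⁻¹|) • volume :=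
    Real.map_matrix_volume_pi_eq_smul_volume_pi hM.ne'
  have hmeas : AEMeasurable (Matrix.toLin' M) (volume : Measure (Fin n → ℝ)) :=
    (LinearMap.continuous_on_pi _).measurable.aemeasurable
  have h1 : ∫ u : Fin n → ℝ, f (M.mulVec u)
      = ∫ y, f y ∂(Measure.map (Matrix.toLin' M) volume) := by
    rw [integral_map hmeas hf.aestronglyMeasurable]
    simp [Matrix.toLin'_apply]
  have hMinv : (0:ℝ) < M.det⁻¹ := by positivity
  rw [h1, hmap, integral_smul_measure, ENNReal.toReal_ofReal (abs_nonneg _),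
    abs_of_pos hMinv, Complex.real_smul, ← mul_assoc, ← Complex.ofReal_mul,
    mul_inv_cancel₀ hM.ne', Complex.ofReal_one, one_mul]

section
open scoped MatrixOrder

lemma gaussInt {n : ℕ} (c μ : ℝ) (hc : 0 < c) (X : Matrix (Fin n) (Fin n) ℝ)
    (hXpos : X.PosDef) (v : Fin n → ℝ) :
    ∫ y : Fin n → ℝ, Complex.exp (-(c:ℂ) * ((y ⬝ᵥ X.mulVec y : ℝ):ℂ)
        - Complex.I * (μ:ℂ) * ((v ⬝ᵥ y : ℝ):ℂ))
    = (((Real.pi / c) ^ ((n:ℝ)/2) * X.det ^ (-(1:ℝ)/2) : ℝ):ℂ) *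
      Complex.exp (-((μ^2/(4*c) : ℝ):ℂ) * ((v ⬝ᵥ X⁻¹.mulVec v : ℝ):ℂ)) := by
  classical
  set B := CFC.sqrt X with hBdef
  have hB : B.PosSemidef := (CFC.sqrt_nonneg X).posSemidef
  have hBB : B * B = X := CFC.sqrt_mul_sqrt_self X hXpos.posSemidef.nonneg
  have hBsymm : Bᵀ = B := by
    have := hB.isHermitian
    rwa [Matrix.IsHermitian, conjTranspose_eq_transpose_of_trivial] at this
  have hdX : 0 < X.det := hXpos.det_pos
  have hdB2 : B.det * B.det = X.det := by rw [← det_mul, hBB]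
  have hdB : 0 < B.det := lt_of_le_of_ne (psd_det_nonneg hB) (by
    intro h; nlinarith)
  set S := B⁻¹ with hSdef
  have hBS : B * S = 1 := mul_nonsing_inv B (isUnit_iff_ne_zero.mpr hdB.ne')
  have hSB : S * B = 1 := nonsing_inv_mul B (isUnit_iff_ne_zero.mpr hdB.ne')
  have hdS : S.det = B.det⁻¹ := by
    rw [hSdef, det_nonsing_inv, Ring.inverse_eq_inv']
  have hdSpos : 0 < S.det := by rw [hdS]; positivity
  have hSsymm : Sᵀ = S := by rw [hSdef, transpose_nonsing_inv, hBsymm]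
  have hSXS : S * X * S = 1 := by
    rw [← hBB, Matrix.mul_assoc, Matrix.mul_assoc B, hBS, Matrix.mul_one, hSB]
  have hSS : S * S = X⁻¹ := by rw [hSdef, ← Matrix.mul_inv_rev, hBB]
  have hcont : Continuous fun y : Fin n → ℝ => Complex.exp (-(c:ℂ) * ((y ⬝ᵥ X.mulVec y : ℝ):ℂ)
      - Complex.I * (μ:ℂ) * ((v ⬝ᵥ y : ℝ):ℂ)) := by
    apply Complex.continuous_exp.comp
    apply Continuous.sub
    · exact continuous_const.mul (Complex.continuous_ofReal.comp
        (continuous_id.dotProduct (continuous_const.matrix_mulVec continuous_id)))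
    · exact continuous_const.mul (Complex.continuous_ofReal.comp
        (continuous_const.dotProduct continuous_id))
  rw [integral_comp_mulVec _ hcont S hdSpos]
  have hQ : ∀ u : Fin n → ℝ, (S.mulVec u) ⬝ᵥ X.mulVec (S.mulVec u) = u ⬝ᵥ u := by
    intro u
    rw [mulVec_mulVec, sw_dot, hSsymm, mulVec_mulVec, ← Matrix.mul_assoc, hSXS, one_mulVec]
  have hlin : ∀ u : Fin n → ℝ, v ⬝ᵥ S.mulVec u = (S.mulVec v) ⬝ᵥ u := by
    intro u; rw [dot_sw, hSsymm]
  have hform : ∀ u : Fin n → ℝ,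
      (-(c:ℂ) * ((S.mulVec u ⬝ᵥ X.mulVec (S.mulVec u) : ℝ):ℂ)
        - Complex.I * (μ:ℂ) * ((v ⬝ᵥ S.mulVec u : ℝ):ℂ))
      = - ∑ i, (c:ℂ) * ((u i : ℝ):ℂ)^2
        + ∑ i, (-(Complex.I * (μ:ℂ) * (((S.mulVec v) i : ℝ):ℂ))) * ((u i : ℝ):ℂ) := by
    intro u
    rw [hQ, hlin]
    simp only [dotProduct, Complex.ofReal_sum, Complex.ofReal_mul, Finset.mul_sum]
    rw [sub_eq_add_neg, ← Finset.sum_neg_distrib, ← Finset.sum_neg_distrib]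
    congr 1 <;> exact Finset.sum_congr rfl fun i _ => by ring
  simp_rw [hform]
  rw [GaussianFourier.integral_cexp_neg_sum_mul_add (fun _ => by simpa using hc) _]
  rw [Finset.prod_mul_distrib, Finset.prod_const, ← Complex.exp_sum, Finset.card_univ,
    Fintype.card_fin]
  have hSvSv : (S.mulVec v) ⬝ᵥ (S.mulVec v) = v ⬝ᵥ X⁻¹.mulVec v := by
    rw [sw_dot, hSsymm, mulVec_mulVec, hSS]
  have hterm : ∀ i, (-(Complex.I * (μ:ℂ) * (((S.mulVec v) i : ℝ):ℂ)))^2 / (4*(c:ℂ))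
      = -((μ^2/(4*c) : ℝ):ℂ) * (((S.mulVec v) i : ℝ):ℂ)^2 := by
    intro i
    have hI := Complex.I_sq
    have hcne : (c:ℂ) ≠ 0 := by exact_mod_cast hc.ne'
    field_simp
    ring_nf
    rw [Complex.I_sq]
    push_cast
    field_simp
  have hsum : ∑ i, (-(Complex.I * (μ:ℂ) * (((S.mulVec v) i : ℝ):ℂ)))^2 / (4*(c:ℂ))
      = -((μ^2/(4*c) : ℝ):ℂ) * ((v ⬝ᵥ X⁻¹.mulVec v : ℝ):ℂ) := by
    simp_rw [hterm]
    rw [← Finset.mul_sum, ← hSvSv]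
    congr 1
    simp only [dotProduct, Complex.ofReal_sum, Complex.ofReal_mul]
    exact Finset.sum_congr rfl fun i _ => by ring
  rw [hsum]
  -- now the constant
  have hpc : (0:ℝ) ≤ Real.pi / c := by positivity
  have hc1 : ((Real.pi : ℂ) / (c:ℂ)) ^ ((1:ℂ)/2) = (((Real.pi / c) ^ ((1:ℝ)/2) : ℝ) : ℂ) := by
    rw [← Complex.ofReal_div, Complex.ofReal_cpow hpc]
    norm_num
  have hc2 : (((Real.pi / c) ^ ((1:ℝ)/2) : ℝ))^n = (Real.pi / c) ^ ((n:ℝ)/2) := by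
    rw [← Real.rpow_natCast ((Real.pi / c) ^ ((1:ℝ)/2)) n, ← Real.rpow_mul hpc]
    ring_nf
  have hdet : X.det ^ (-(1:ℝ)/2) = B.det⁻¹ := by
    have h2 : X.det = B.det ^ ((2:ℕ):ℝ) := by
      rw [Real.rpow_natCast]; rw [← hdB2]; ring
    rw [h2, ← Real.rpow_mul hdB.le]
    norm_num [Real.rpow_neg_one]
  rw [hc1, ← Complex.ofReal_pow, hc2, hdS, hdet.symm]
  push_cast
  ring

end

/-- **Wigner transform of a Gaussian.** For the normalized Gaussian
`ψ(x) = (πℏ)^{-n/4} (det X)^{1/4} exp(-(1/2ℏ) xᵀ(X+iY)x)` (`X, Y` real symmetric, `X > 0`), the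
Wigner transform `(1/(2πℏ))ⁿ ∫ e^{-ip·y/ℏ} ψ(x+y/2) conj(ψ(x-y/2)) dy` equals
`(πℏ)^{-n} exp(-(1/ℏ) zᵀGz)` with `z = (x,p)` and
`G = [[X + YX⁻¹Y, YX⁻¹], [X⁻¹Y, X⁻¹]]`. -/
theorem stmt16 {n : ℕ} (ℏ : ℝ) (hℏ : 0 < ℏ)
    (X Y : Matrix (Fin n) (Fin n) ℝ) (hX : X.IsSymm) (hY : Y.IsSymm) (hXpos : X.PosDef)
    (ψ : (Fin n → ℝ) → ℂ)
    (hψ : ∀ x : Fin n → ℝ,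
      ψ x = (((Real.pi * ℏ) ^ (-(n : ℝ) / 4) * X.det ^ ((1 : ℝ) / 4) : ℝ) : ℂ) *
        Complex.exp (-(1 / (2 * (ℏ : ℂ))) *
          (((x ⬝ᵥ X.mulVec x : ℝ) : ℂ) + Complex.I * ((x ⬝ᵥ Y.mulVec x : ℝ) : ℂ)))) :
    ∀ x p : Fin n → ℝ,
      (((1 / (2 * Real.pi * ℏ)) ^ n : ℝ) : ℂ) *
          ∫ y : Fin n → ℝ,
            Complex.exp (-(Complex.I / (ℏ : ℂ)) * ((p ⬝ᵥ y : ℝ) : ℂ)) *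
              ψ (x + y / 2) * (starRingEnd ℂ) (ψ (x - y / 2))
        = (((Real.pi * ℏ) ^ (-(n : ℝ)) *
            Real.exp (-(1 / ℏ) * (Sum.elim x p ⬝ᵥ
              (Matrix.fromBlocks (X + Y * X⁻¹ * Y) (Y * X⁻¹) (X⁻¹ * Y) X⁻¹).mulVec
                (Sum.elim x p))) : ℝ) : ℂ) := by
  intro x p
  have hπℏ : 0 < Real.pi * ℏ := by positivity
  have hdX : 0 < X.det := hXpos.det_pos
  set C : ℝ := (Real.pi * ℏ) ^ (-(n : ℝ) / 4) * X.det ^ ((1 : ℝ) / 4) with hCdef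
  set w : Fin n → ℝ := Y.mulVec x + p with hwdef
  have hhalf : ∀ y : Fin n → ℝ, y / 2 = (2⁻¹ : ℝ) • y := by
    intro y; funext i; simp [Pi.div_apply]; ring
  have hq1 : ∀ y : Fin n → ℝ,
      ((x + y/2) ⬝ᵥ X.mulVec (x + y/2)) + ((x - y/2) ⬝ᵥ X.mulVec (x - y/2))
      = 2*(x ⬝ᵥ X.mulVec x) + (1/2)*(y ⬝ᵥ X.mulVec y) := by
    intro y
    rw [hhalf]
    simp only [mulVec_add, mulVec_sub, mulVec_smul, dotProduct_add, dotProduct_sub,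
      add_dotProduct, sub_dotProduct, dotProduct_smul, smul_dotProduct, smul_eq_mul]
    ring
  have hq2 : ∀ y : Fin n → ℝ,
      ((x + y/2) ⬝ᵥ Y.mulVec (x + y/2)) - ((x - y/2) ⬝ᵥ Y.mulVec (x - y/2))
      = x ⬝ᵥ Y.mulVec y + y ⬝ᵥ Y.mulVec x := by
    intro y
    rw [hhalf]
    simp only [mulVec_add, mulVec_sub, mulVec_smul, dotProduct_add, dotProduct_sub,
      add_dotProduct, sub_dotProduct, dotProduct_smul, smul_dotProduct, smul_eq_mul]
    ring
  have swY : ∀ (a b : Fin n → ℝ), a ⬝ᵥ Y.mulVec b = (Y.mulVec a) ⬝ᵥ b := by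
    intro a b; rw [dot_sw, hY]
  set K1 : ℝ := C^2 * Real.exp (-(1/ℏ) * (x ⬝ᵥ X.mulVec x)) with hK1def
  have hℏC : (ℏ:ℂ) ≠ 0 := by exact_mod_cast hℏ.ne'
  have hinteg : ∀ y : Fin n → ℝ,
      Complex.exp (-(Complex.I / (ℏ : ℂ)) * ((p ⬝ᵥ y : ℝ) : ℂ)) *
        ψ (x + y / 2) * (starRingEnd ℂ) (ψ (x - y / 2))
      = (K1 : ℂ) * Complex.exp (-((1/(4*ℏ) : ℝ):ℂ) * ((y ⬝ᵥ X.mulVec y : ℝ):ℂ)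
          - Complex.I * ((1/ℏ : ℝ):ℂ) * ((w ⬝ᵥ y : ℝ):ℂ)) := by
    intro y
    have hmul : ∀ (K l a b : ℂ), Complex.exp l * (K * Complex.exp a) * (K * Complex.exp b)
        = K^2 * Complex.exp (l + a + b) := by
      intros K l a b; rw [Complex.exp_add, Complex.exp_add]; ring
    rw [hψ (x + y/2), hψ (x - y/2), _root_.map_mul, ← Complex.exp_conj,
      Complex.conj_ofReal, hmul]
    simp only [_root_.map_mul, map_add, map_neg, map_div₀, _root_.map_one, map_ofNat,
      Complex.conj_ofReal, Complex.conj_I]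
    rw [hK1def, hCdef]
    push_cast
    rw [mul_assoc, ← Complex.exp_add]
    congr 1
    have e1 : ((x + y/2) ⬝ᵥ X.mulVec (x + y/2) : ℝ)
        = 2*(x ⬝ᵥ X.mulVec x) + (1/2)*(y ⬝ᵥ X.mulVec y)
          - ((x - y/2) ⬝ᵥ X.mulVec (x - y/2)) := by linarith [hq1 y]
    have e2 : ((x + y/2) ⬝ᵥ Y.mulVec (x + y/2) : ℝ)
        = 2*((Y.mulVec x) ⬝ᵥ y)
          + ((x - y/2) ⬝ᵥ Y.mulVec (x - y/2)) := by
      have h := hq2 y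
      rw [swY x y, dotProduct_comm y (Y.mulVec x)] at h
      linarith
    have hw : (w ⬝ᵥ y : ℝ) = (Y.mulVec x) ⬝ᵥ y + p ⬝ᵥ y := add_dotProduct _ _ _
    have E1 : (((x + y/2) ⬝ᵥ X.mulVec (x + y/2) : ℝ) : ℂ)
        = 2*((x ⬝ᵥ X.mulVec x : ℝ):ℂ) + (1/2)*((y ⬝ᵥ X.mulVec y : ℝ):ℂ)
          - (((x - y/2) ⬝ᵥ X.mulVec (x - y/2) : ℝ):ℂ) := by rw [e1]; push_cast; ring
    have E2 : (((x + y/2) ⬝ᵥ Y.mulVec (x + y/2) : ℝ) : ℂ)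
        = 2*(((Y.mulVec x) ⬝ᵥ y : ℝ):ℂ)
          + (((x - y/2) ⬝ᵥ Y.mulVec (x - y/2) : ℝ):ℂ) := by rw [e2]; push_cast; ring
    have HW : ((w ⬝ᵥ y : ℝ) : ℂ) = (((Y.mulVec x) ⬝ᵥ y : ℝ):ℂ) + ((p ⬝ᵥ y : ℝ):ℂ) := by
      rw [hw]; push_cast; ring
    rw [E1, E2, HW]
    field_simp
    ring_nf
  have hzGz : Sum.elim x p ⬝ᵥ
      (Matrix.fromBlocks (X + Y * X⁻¹ * Y) (Y * X⁻¹) (X⁻¹ * Y) X⁻¹).mulVec (Sum.elim x p)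
      = x ⬝ᵥ X.mulVec x + w ⬝ᵥ X⁻¹.mulVec w := by
    rw [fromBlocks_mulVec, sumElim_dotProduct_sumElim]
    simp only [hwdef, add_mulVec, mulVec_add, dotProduct_add, add_dotProduct,
      Sum.elim_comp_inl, Sum.elim_comp_inr, ← mulVec_mulVec]
    rw [swY x (X⁻¹.mulVec (Y.mulVec x)), swY x (X⁻¹.mulVec p)]
    ring
  simp_rw [hinteg]
  rw [MeasureTheory.integral_const_mul]
  have hc4 : 0 < 1/(4*ℏ) := by positivity
  rw [gaussInt (1/(4*ℏ)) (1/ℏ) hc4 X hXpos w]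
  rw [hzGz]
  have hμ : (1/ℏ)^2/(4*(1/(4*ℏ))) = 1/ℏ := by field_simp
  rw [hμ]
  set a1 : ℝ := (Real.pi*ℏ)^(-(n:ℝ)/4) with ha1
  set a2 : ℝ := X.det^((1:ℝ)/4) with ha2
  set a3 : ℝ := (Real.pi/(1/(4*ℏ)))^((n:ℝ)/2) with ha3
  set a4 : ℝ := X.det^(-(1:ℝ)/2) with ha4
  set a5 : ℝ := (Real.pi*ℏ)^(-(n:ℝ)) with ha5
  set e1 : ℝ := Real.exp (-(1/ℏ) * (x ⬝ᵥ X.mulVec x)) with he1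
  set e2 : ℝ := Real.exp (-(1/ℏ) * (w ⬝ᵥ X⁻¹.mulVec w)) with he2
  have hE1 : Complex.exp (-((1/ℏ:ℝ):ℂ) * ((w ⬝ᵥ X⁻¹.mulVec w : ℝ):ℂ))
      = ((Real.exp (-(1/ℏ) * (w ⬝ᵥ X⁻¹.mulVec w)) : ℝ) : ℂ) := by
    rw [Complex.ofReal_exp]; congr 1; push_cast; ring
  rw [hE1, hK1def, hCdef]
  have hsplit : -(1/ℏ) * (x ⬝ᵥ X.mulVec x + w ⬝ᵥ X⁻¹.mulVec w)
      = -(1/ℏ) * (x ⬝ᵥ X.mulVec x) + -(1/ℏ) * (w ⬝ᵥ X⁻¹.mulVec w) := by ring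
  rw [hsplit, Real.exp_add]
  norm_cast
  -- real identity
  have h1 : Real.pi/(1/(4*ℏ)) = 4*(Real.pi*ℏ) := by field_simp
  have h2 : ((Real.pi*ℏ)^(-(n:ℝ)/4))^2 = (Real.pi*ℏ)^(-(n:ℝ)/2) := by
    rw [← Real.rpow_natCast ((Real.pi*ℏ)^(-(n:ℝ)/4)) 2, ← Real.rpow_mul hπℏ.le]
    congr 1
    push_cast
    ring
  have h3 : (X.det^((1:ℝ)/4))^2 = X.det^((1:ℝ)/2) := by
    rw [← Real.rpow_natCast (X.det^((1:ℝ)/4)) 2, ← Real.rpow_mul hdX.le]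
    congr 1
    push_cast
    ring
  have h4 : X.det^((1:ℝ)/2) * X.det^(-(1:ℝ)/2) = 1 := by
    rw [← Real.rpow_add hdX]; norm_num
  have h5 : (4*(Real.pi*ℏ))^((n:ℝ)/2) = 2^n * (Real.pi*ℏ)^((n:ℝ)/2) := by
    rw [Real.mul_rpow (by norm_num) hπℏ.le]
    congr 1
    have h40 : (4:ℝ) = (2:ℝ)^(2:ℕ) := by norm_num
    rw [h40, ← Real.rpow_natCast (2:ℝ) 2, ← Real.rpow_mul (by norm_num : (0:ℝ) ≤ 2),
      ← Real.rpow_natCast (2:ℝ) n]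
    congr 1
    push_cast
    ring
  have h6 : (Real.pi*ℏ)^(-(n:ℝ)/2) * (Real.pi*ℏ)^((n:ℝ)/2) = 1 := by
    rw [← Real.rpow_add hπℏ]
    have hz : -(n:ℝ)/2 + (n:ℝ)/2 = 0 := by ring
    rw [hz, Real.rpow_zero]
  have h8 : (1/(2*Real.pi*ℏ))^n * 2^n = (1/(Real.pi*ℏ))^n := by
    rw [← mul_pow]; congr 1; field_simp
  have h9 : (1/(Real.pi*ℏ))^n = (Real.pi*ℏ)^(-(n:ℝ)) := by
    rw [← Real.rpow_natCast (1/(Real.pi*ℏ)) n, one_div, ← Real.rpow_neg_one (Real.pi*ℏ),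
      ← Real.rpow_mul hπℏ.le]
    norm_num
  have hconst : (1/(2*Real.pi*ℏ))^n * (a1 * a2)^2 * (a3 * a4) = a5 := by
    rw [ha1, ha2, ha3, ha4, ha5, h1, mul_pow, h2, h3, h5]
    have : (1/(2*Real.pi*ℏ))^n * ((Real.pi*ℏ)^(-(n:ℝ)/2) * X.det^((1:ℝ)/2)) *
        ((2:ℝ)^n * (Real.pi*ℏ)^((n:ℝ)/2) * X.det^(-(1:ℝ)/2))
        = ((1/(2*Real.pi*ℏ))^n * 2^n) * ((Real.pi*ℏ)^(-(n:ℝ)/2) * (Real.pi*ℏ)^((n:ℝ)/2)) *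
          (X.det^((1:ℝ)/2) * X.det^(-(1:ℝ)/2)) := by ring
    rw [this, h4, h6, h8, h9]
    ring
  linear_combination (Real.exp (-(1/ℏ) * (x ⬝ᵥ X.mulVec x)) *
    Real.exp (-(1/ℏ) * (w ⬝ᵥ X⁻¹.mulVec w))) * hconst
end
end

section
/- Every symmetric positive definite symplectic matrix is the Wigner matrix of a Gaussian state: let G be a real 2n×2n matrix that is symmetric, positive definite, and symplectic. Then there exist real symmetric n×n matrices X and Y with X positive definite such that G = [[X + YX^{-1}Y, YX^{-1}],[X^{-1}Y, X^{-1}]]; equivalently, G = SᵀS with S symplectic of the lower block-triangular form S = [[X^{1/2}, 0],[X^{-1/2}Y, X^{-1/2}]]. -/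
open Matrix MeasureTheory
open scoped ComplexOrder

noncomputable section

/-- Square root of a positive semidefinite matrix (definition from the older Mathlib,
where `Matrix.PosSemidef.sqrt` existed). -/
noncomputable def Matrix.PosSemidef.sqrt {n 𝕜 : Type*} [Fintype n] [RCLike 𝕜] [DecidableEq n]
    {A : Matrix n n 𝕜} (hA : A.PosSemidef) : Matrix n n 𝕜 :=
  hA.1.eigenvectorUnitary.1 * diagonal ((↑) ∘ (√·) ∘ hA.1.eigenvalues) *
    (star hA.1.eigenvectorUnitary : Matrix n n 𝕜)

theorem Matrix.PosSemidef.posSemidef_sqrt {n 𝕜 : Type*} [Fintype n] [RCLike 𝕜] [DecidableEq n]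
    {A : Matrix n n 𝕜} (hA : A.PosSemidef) : hA.sqrt.PosSemidef := by
  unfold Matrix.PosSemidef.sqrt
  have h := (posSemidef_diagonal_iff (d := ((↑) ∘ (√·) ∘ hA.1.eigenvalues : n → 𝕜))).mpr
    (fun i => by simp [Real.sqrt_nonneg])
  have := h.mul_mul_conjTranspose_same (hA.1.eigenvectorUnitary : Matrix n n 𝕜)
  simpa [Matrix.star_eq_conjTranspose] using this

theorem Matrix.PosSemidef.sqrt_mul_self {n 𝕜 : Type*} [Fintype n] [RCLike 𝕜] [DecidableEq n]
    {A : Matrix n n 𝕜} (hA : A.PosSemidef) : hA.sqrt * hA.sqrt = A := by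
  unfold Matrix.PosSemidef.sqrt
  conv_rhs => rw [hA.1.spectral_theorem, Unitary.conjStarAlgAut_apply]
  have hU : (star hA.1.eigenvectorUnitary : Matrix n n 𝕜) * hA.1.eigenvectorUnitary.1 = 1 :=
    Unitary.coe_star_mul_self _
  rw [show ∀ a b c d e f : Matrix n n 𝕜, a * b * c * (d * e * f) = a * b * (c * d) * e * f by
    intros; simp only [Matrix.mul_assoc], hU, Matrix.mul_one, Matrix.mul_assoc _ (diagonal _) (diagonal _),
    diagonal_mul_diagonal]
  congr 3
  funext i
  simp only [Function.comp]
  rw [← RCLike.ofReal_mul, Real.mul_self_sqrt (hA.eigenvalues_nonneg i)]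

/-- Every symmetric positive definite symplectic matrix `G` is the Wigner matrix
of a Gaussian state: there exist real symmetric `X, Y` with `X` positive definite such that
`G = [[X + YX⁻¹Y, YX⁻¹], [X⁻¹Y, X⁻¹]]`; equivalently `G = SᵀS` with `S` the symplectic
lower block-triangular matrix `[[X^{1/2}, 0], [X^{-1/2}Y, X^{-1/2}]]`. -/
theorem stmt18 {n : ℕ} (G : Matrix (Fin n ⊕ Fin n) (Fin n ⊕ Fin n) ℝ)
    (hGSymm : G.IsSymm) (hGPos : G.PosDef) (hGSp : IsSymplectic G) :
    ∃ (X Y : Matrix (Fin n) (Fin n) ℝ) (hXpos : X.PosDef), X.IsSymm ∧ Y.IsSymm ∧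
      G = Matrix.fromBlocks (X + Y * X⁻¹ * Y) (Y * X⁻¹) (X⁻¹ * Y) X⁻¹ ∧
      (let S : Matrix (Fin n ⊕ Fin n) (Fin n ⊕ Fin n) ℝ :=
        Matrix.fromBlocks hXpos.posSemidef.sqrt 0
          (hXpos.posSemidef.sqrt⁻¹ * Y) hXpos.posSemidef.sqrt⁻¹
       G = Sᵀ * S ∧ IsSymplectic S) := by
  classical
  set A := G.toBlocks₁₁ with hA
  set B := G.toBlocks₁₂ with hB
  set C := G.toBlocks₂₁ with hC
  set D := G.toBlocks₂₂ with hD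
  have hG : G = fromBlocks A B C D := (fromBlocks_toBlocks G).symm
  -- symmetry of blocks
  have hsym : fromBlocks Aᵀ Cᵀ Bᵀ Dᵀ = fromBlocks A B C D := by
    rw [← fromBlocks_transpose, ← hG]; exact hGSymm
  obtain ⟨hAs, hCB, hBC, hDs⟩ := fromBlocks_inj.mp hsym
  -- symplectic block equations
  have hsp : fromBlocks (Aᵀ * 0 + Cᵀ * (-1)) (Aᵀ * 1 + Cᵀ * 0) (Bᵀ * 0 + Dᵀ * (-1)) (Bᵀ * 1 + Dᵀ * 0)
      * fromBlocks A B C D = fromBlocks 0 1 (-1) 0 := by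
    rw [← fromBlocks_multiply, ← fromBlocks_transpose, ← hG]
    exact hGSp
  rw [fromBlocks_multiply] at hsp
  obtain ⟨e1, e2, e3, e4⟩ := fromBlocks_inj.mp hsp
  simp only [mul_zero, mul_one, mul_neg, zero_add, add_zero, neg_mul, hAs, hCB, hDs,
    neg_add_eq_zero, zero_mul, neg_mul] at e1 e2 e3 e4
  -- D pos def
  have hDpd : D.PosDef := by
    refine PosDef.of_dotProduct_mulVec_pos ?_ (fun x hx => ?_)
    · rw [IsHermitian, conjTranspose_eq_transpose_of_trivial]; exact hDs
    · have hy : Sum.elim (0 : Fin n → ℝ) x ≠ 0 := by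
        intro h
        exact hx (funext fun i => by simpa using congrFun h (Sum.inr i))
      have := hGPos.dotProduct_mulVec_pos hy
      rw [hG, fromBlocks_mulVec] at this
      simpa [sumElim_dotProduct_sumElim] using this
  have hDdet : IsUnit D.det := hDpd.det_pos.ne'.isUnit
  clear hsym hsp
  -- key identities
  have hDD : D * D⁻¹ = 1 := Matrix.mul_nonsing_inv D hDdet
  have hD'D : D⁻¹ * D = 1 := Matrix.nonsing_inv_mul D hDdet
  have hAD : A * D = 1 + B * B := by rw [← e2]; abel
  have hYs : D⁻¹ * Bᵀ = B * D⁻¹ := by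
    have h1 := congrArg (fun M => D⁻¹ * M * D⁻¹) e4
    simp only [Matrix.mul_assoc] at h1
    rw [hDD, mul_one, ← Matrix.mul_assoc, hD'D, one_mul] at h1
    exact h1.symm
  have hXinv : (D⁻¹)⁻¹ = D := Matrix.nonsing_inv_nonsing_inv D hDdet
  have hXpos : (D⁻¹).PosDef := hDpd.inv
  have hXsymm : (D⁻¹).IsSymm := by rw [Matrix.IsSymm, Matrix.transpose_nonsing_inv, hDs]
  have hYsymm : (B * D⁻¹).IsSymm := by
    rw [Matrix.IsSymm, transpose_mul, Matrix.transpose_nonsing_inv, hDs, hYs]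
  refine ⟨D⁻¹, B * D⁻¹, hXpos, hXsymm, hYsymm, ?_, ?_, ?_⟩
  · rw [hG, hXinv]
    refine fromBlocks_inj.mpr ⟨?_, ?_, ?_, rfl⟩
    · have : A * (D * D⁻¹) = (1 + B * B) * D⁻¹ := by
        rw [← Matrix.mul_assoc, hAD]
      rw [hDD, mul_one] at this
      rw [this, add_mul, one_mul, Matrix.mul_assoc B B D⁻¹,
        Matrix.mul_assoc (B * D⁻¹) D (B * D⁻¹), ← Matrix.mul_assoc (B * D⁻¹) D,
        Matrix.mul_assoc B D⁻¹ D, hD'D, mul_one]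
    · rw [Matrix.mul_assoc, hD'D, mul_one]
    · rw [← hBC, ← Matrix.mul_assoc, e4, Matrix.mul_assoc, hDD, mul_one]
  · show G = _
    set R := hXpos.posSemidef.sqrt with hR
    have hRps : R.PosSemidef := hXpos.posSemidef.posSemidef_sqrt
    have hRsymm : Rᵀ = R := by
      rw [← conjTranspose_eq_transpose_of_trivial]; exact hRps.1
    have hRR : R * R = D⁻¹ := hXpos.posSemidef.sqrt_mul_self
    have hRdet : IsUnit R.det := by
      have hd : R.det * R.det = (D⁻¹).det := by rw [← det_mul, hRR]
      refine isUnit_iff_ne_zero.mpr fun h => ?_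
      rw [h, mul_zero] at hd
      exact hXpos.det_pos.ne' hd.symm
    have hRRi : R * R⁻¹ = 1 := Matrix.mul_nonsing_inv R hRdet
    have hRiR : R⁻¹ * R = 1 := Matrix.nonsing_inv_mul R hRdet
    have hRiT : (R⁻¹)ᵀ = R⁻¹ := by rw [Matrix.transpose_nonsing_inv, hRsymm]
    have hRii : R⁻¹ * R⁻¹ = D := by rw [← Matrix.mul_inv_rev, hRR, hXinv]
    rw [fromBlocks_transpose, fromBlocks_multiply, hG]
    refine fromBlocks_inj.mpr ⟨?_, ?_, ?_, ?_⟩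
    · rw [hRsymm, transpose_mul, hRiT, hYsymm, hRR]
      have h5 : A * (D * D⁻¹) = (1 + B * B) * D⁻¹ := by rw [← Matrix.mul_assoc, hAD]
      rw [hDD, mul_one] at h5
      rw [h5, add_mul, one_mul]
      congr 1
      rw [Matrix.mul_assoc (B * D⁻¹) R⁻¹ (R⁻¹ * (B * D⁻¹)), ← Matrix.mul_assoc R⁻¹ R⁻¹,
        hRii, ← Matrix.mul_assoc (B * D⁻¹) D (B * D⁻¹), Matrix.mul_assoc B D⁻¹ D, hD'D,
        mul_one, Matrix.mul_assoc B B D⁻¹]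
    · rw [hRsymm, transpose_mul, hRiT, hYsymm, mul_zero, zero_add,
        Matrix.mul_assoc (B * D⁻¹) R⁻¹ R⁻¹, hRii, Matrix.mul_assoc B D⁻¹ D, hD'D, mul_one]
    · rw [transpose_zero, zero_mul, zero_add, hRiT, ← Matrix.mul_assoc R⁻¹ R⁻¹, hRii,
        ← Matrix.mul_assoc D B D⁻¹, e4, Matrix.mul_assoc Bᵀ D D⁻¹, hDD, mul_one, hBC]
    · rw [transpose_zero, zero_mul, zero_add, hRiT, hRii]
  · show _ * stdJ n * _ = stdJ n
    set R := hXpos.posSemidef.sqrt with hR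
    have hRps : R.PosSemidef := hXpos.posSemidef.posSemidef_sqrt
    have hRsymm : Rᵀ = R := by
      rw [← conjTranspose_eq_transpose_of_trivial]; exact hRps.1
    have hRR : R * R = D⁻¹ := hXpos.posSemidef.sqrt_mul_self
    have hRdet : IsUnit R.det := by
      have hd : R.det * R.det = (D⁻¹).det := by rw [← det_mul, hRR]
      refine isUnit_iff_ne_zero.mpr fun h => ?_
      rw [h, mul_zero] at hd
      exact hXpos.det_pos.ne' hd.symm
    have hRRi : R * R⁻¹ = 1 := Matrix.mul_nonsing_inv R hRdet
    have hRiR : R⁻¹ * R = 1 := Matrix.nonsing_inv_mul R hRdet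
    have hRiT : (R⁻¹)ᵀ = R⁻¹ := by rw [Matrix.transpose_nonsing_inv, hRsymm]
    have hRii : R⁻¹ * R⁻¹ = D := by rw [← Matrix.mul_inv_rev, hRR, hXinv]
    rw [stdJ, fromBlocks_transpose, fromBlocks_multiply, fromBlocks_multiply]
    refine fromBlocks_inj.mpr ⟨?_, ?_, ?_, ?_⟩ <;>
      simp only [hRsymm, transpose_mul, hRiT, hYsymm, Matrix.transpose_nonsing_inv, hDs, hYs,
        transpose_zero, mul_zero, zero_mul,
        mul_neg, neg_mul, mul_one, one_mul, zero_add, add_zero, neg_zero]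
    · rw [Matrix.mul_assoc (B * D⁻¹) R⁻¹ R, hRiR, mul_one, ← Matrix.mul_assoc R R⁻¹,
        hRRi, one_mul]
      abel
    · rw [hRRi]
    · rw [hRiR]
end
end
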